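/- arXiv:1608.06712 — 5 statements merged into one kernel-verified Lean document; each statement's English description precedes it below -/
import Mathlib

section
/- The core of a double groupoid is a groupoid: the set E(B) of boxes E with t(E), r(E) ∈ P, equipped with source s(E) = bl(E), target e(E) = tr(E), identities Θ_P = id∘id(P), multiplication E∘F = {(id l(F), F) over (E, id b(F))}, and inverse E^(-1) = (E · id b(E)^{-1})^v, satisfies the groupoid axioms (associativity, unit laws, and inverse laws). -/
/-- A (discrete) double groupoid: a set of boxes `B` with two compatible groupoid
structures, with horizontal edge groupoid `H` and vertical edge groupoid `V`,
both over a common base `P`. -/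
structure DGpd (B : Type*) (V : Type*) (H : Type*) (P : Type*) where
  sV : V → P
  eV : V → P
  idV : P → V
  mulV : V → V → V
  invV : V → V
  sH : H → P
  eH : H → P
  idH : P → H
  mulH : H → H → H
  invH : H → H
  t : B → H
  b : B → H
  l : B → V
  r : B → V
  corner_tl : ∀ A, sH (t A) = sV (l A)
  corner_tr : ∀ A, eH (t A) = sV (r A)
  corner_bl : ∀ A, sH (b A) = eV (l A)
  corner_br : ∀ A, eH (b A) = eV (r A)
  idh : V → B
  idv : H → B
  hc : B → B → B
  vc : B → B → B
  hi : B → B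
  vi : B → B
  -- groupoid axioms for V
  sV_id : ∀ p, sV (idV p) = p
  eV_id : ∀ p, eV (idV p) = p
  sV_mul : ∀ g h, eV g = sV h → sV (mulV g h) = sV g
  eV_mul : ∀ g h, eV g = sV h → eV (mulV g h) = eV h
  mulV_assoc : ∀ g h k, eV g = sV h → eV h = sV k →
    mulV (mulV g h) k = mulV g (mulV h k)
  idV_mul : ∀ g, mulV (idV (sV g)) g = g
  mulV_id : ∀ g, mulV g (idV (eV g)) = g
  sV_inv : ∀ g, sV (invV g) = eV g
  eV_inv : ∀ g, eV (invV g) = sV g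
  mulV_inv : ∀ g, mulV g (invV g) = idV (sV g)
  invV_mul : ∀ g, mulV (invV g) g = idV (eV g)
  -- groupoid axioms for H
  sH_id : ∀ p, sH (idH p) = p
  eH_id : ∀ p, eH (idH p) = p
  sH_mul : ∀ x y, eH x = sH y → sH (mulH x y) = sH x
  eH_mul : ∀ x y, eH x = sH y → eH (mulH x y) = eH y
  mulH_assoc : ∀ x y z, eH x = sH y → eH y = sH z →
    mulH (mulH x y) z = mulH x (mulH y z)
  idH_mul : ∀ x, mulH (idH (sH x)) x = x
  mulH_id : ∀ x, mulH x (idH (eH x)) = x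
  sH_inv : ∀ x, sH (invH x) = eH x
  eH_inv : ∀ x, eH (invH x) = sH x
  mulH_inv : ∀ x, mulH x (invH x) = idH (sH x)
  invH_mul : ∀ x, mulH (invH x) x = idH (eH x)
  -- sides of identity boxes
  idh_t : ∀ g, t (idh g) = idH (sV g)
  idh_b : ∀ g, b (idh g) = idH (eV g)
  idh_l : ∀ g, l (idh g) = g
  idh_r : ∀ g, r (idh g) = g
  idv_t : ∀ x, t (idv x) = x
  idv_b : ∀ x, b (idv x) = x
  idv_l : ∀ x, l (idv x) = idV (sH x)
  idv_r : ∀ x, r (idv x) = idV (eH x)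
  -- horizontal groupoid structure on boxes (base V)
  hc_t : ∀ A B, r A = l B → t (hc A B) = mulH (t A) (t B)
  hc_b : ∀ A B, r A = l B → b (hc A B) = mulH (b A) (b B)
  hc_l : ∀ A B, r A = l B → l (hc A B) = l A
  hc_r : ∀ A B, r A = l B → r (hc A B) = r B
  hc_assoc : ∀ A B C, r A = l B → r B = l C → hc (hc A B) C = hc A (hc B C)
  idh_hc : ∀ A, hc (idh (l A)) A = A
  hc_idh : ∀ A, hc A (idh (r A)) = A
  hi_l : ∀ A, l (hi A) = r A
  hi_r : ∀ A, r (hi A) = l A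
  hi_t : ∀ A, t (hi A) = invH (t A)
  hi_b : ∀ A, b (hi A) = invH (b A)
  hc_hi : ∀ A, hc A (hi A) = idh (l A)
  hi_hc : ∀ A, hc (hi A) A = idh (r A)
  -- vertical groupoid structure on boxes (base H)
  vc_t : ∀ A B, b A = t B → t (vc A B) = t A
  vc_b : ∀ A B, b A = t B → b (vc A B) = b B
  vc_l : ∀ A B, b A = t B → l (vc A B) = mulV (l A) (l B)
  vc_r : ∀ A B, b A = t B → r (vc A B) = mulV (r A) (r B)
  vc_assoc : ∀ A B C, b A = t B → b B = t C → vc (vc A B) C = vc A (vc B C)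
  idv_vc : ∀ A, vc (idv (t A)) A = A
  vc_idv : ∀ A, vc A (idv (b A)) = A
  vi_t : ∀ A, t (vi A) = b A
  vi_b : ∀ A, b (vi A) = t A
  vi_l : ∀ A, l (vi A) = invV (l A)
  vi_r : ∀ A, r (vi A) = invV (r A)
  vc_vi : ∀ A, vc A (vi A) = idv (t A)
  vi_vc : ∀ A, vc (vi A) A = idv (b A)
  -- the identity boxes are functorial
  idh_mulV : ∀ g h, eV g = sV h → vc (idh g) (idh h) = idh (mulV g h)
  idv_mulH : ∀ x y, eH x = sH y → hc (idv x) (idv y) = idv (mulH x y)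
  id_id : ∀ p, idh (idV p) = idv (idH p)
  -- the interchange law
  interchange : ∀ K L M N, r K = l L → r M = l N → b K = t M → b L = t N →
    vc (hc K L) (hc M N) = hc (vc K M) (vc L N)

namespace DGpd

variable {B V H P : Type*} (D : DGpd B V H P)

/-- The totally degenerate box at a point. -/
def Theta (p : P) : B := D.idh (D.idV p)

/-- A box all of whose four sides are identities at `p`; i.e. an element of the
fiber `K(B)_p` of the abelian group bundle `K(B)`. -/
def InFiber (p : P) (A : B) : Prop :=
  D.t A = D.idH p ∧ D.b A = D.idH p ∧ D.l A = D.idV p ∧ D.r A = D.idV p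

/-- A box belonging to the core groupoid: its top and right sides are identities. -/
def IsCore (A : B) : Prop :=
  (∃ p, D.t A = D.idH p) ∧ (∃ p, D.r A = D.idV p)

/-- Source of the core groupoid: the bottom-left vertex. -/
def coreSrc (A : B) : P := D.sH (D.b A)

/-- Target of the core groupoid: the top-right vertex. -/
def coreTgt (A : B) : P := D.eH (D.t A)

/-- Core multiplication `E ∘ F`. -/
def coreMul (E F : B) : B :=
  D.vc (D.hc (D.idh (D.l F)) F) (D.hc E (D.idv (D.b F)))

/-- Core inversion `E ↦ E^{(-1)} = (E ⋅ id_v(b(E)^{-1}))^v`. -/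
def coreInv (E : B) : B := D.vi (D.hc E (D.idv (D.invH (D.b E))))

/-- The core action of the core groupoid on boxes:
`E ⊸ A = {(id l(A), A) over (E, id b(A))}`. -/
def coreAct (E A : B) : B :=
  D.vc (D.hc (D.idh (D.l A)) A) (D.hc E (D.idv (D.b A)))

end DGpd
namespace DGpd

variable {B V H P : Type*} (D : DGpd B V H P)

lemma invV_id (p : P) : D.invV (D.idV p) = D.idV p := by
  have h1 := D.mulV_inv (D.idV p)
  rw [D.sV_id] at h1
  have h2 := D.idV_mul (D.invV (D.idV p))
  rw [D.sV_inv, D.eV_id] at h2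
  exact h2.symm.trans h1

lemma vc_cancel {A X Y : B} (hX : D.b A = D.t X) (hY : D.b A = D.t Y)
    (h : D.vc A X = D.vc A Y) : X = Y := by
  have h' := congrArg (D.vc (D.vi A)) h
  rw [← D.vc_assoc _ _ _ (D.vi_b A) hX, ← D.vc_assoc _ _ _ (D.vi_b A) hY,
      D.vi_vc] at h'
  have e1 : D.vc (D.idv (D.b A)) X = X := by rw [hX]; exact D.idv_vc X
  have e2 : D.vc (D.idv (D.b A)) Y = Y := by rw [hY]; exact D.idv_vc Y
  rw [e1, e2] at h'
  exact h'

lemma vi_idv (x : H) : D.vi (D.idv x) = D.idv x := by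
  have e : D.vc (D.idv x) (D.idv x) = D.idv x := by
    have := D.idv_vc (D.idv x); rwa [D.idv_t] at this
  apply D.vc_cancel (A := D.idv x)
  · rw [D.vi_t]
  · rw [D.idv_b, D.idv_t]
  · rw [D.vc_vi, D.idv_t, e]

lemma vi_idh (g : V) : D.vi (D.idh g) = D.idh (D.invV g) := by
  apply D.vc_cancel (A := D.idh g)
  · rw [D.vi_t]
  · rw [D.idh_b, D.idh_t, D.sV_inv]
  · rw [D.vc_vi, D.idh_t, ← D.id_id, D.idh_mulV _ _ (D.sV_inv g).symm, D.mulV_inv]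

lemma vi_hc (A C : B) (h : D.r A = D.l C) :
    D.vi (D.hc A C) = D.hc (D.vi A) (D.vi C) := by
  have hvi : D.r (D.vi A) = D.l (D.vi C) := by rw [D.vi_r, D.vi_l, h]
  have hbA : D.b A = D.t (D.vi A) := (D.vi_t A).symm
  have hbC : D.b C = D.t (D.vi C) := (D.vi_t C).symm
  have hH : D.eH (D.t A) = D.sH (D.t C) := by rw [D.corner_tr, D.corner_tl, h]
  have hB : D.eH (D.b A) = D.sH (D.b C) := by rw [D.corner_br, D.corner_bl, h]
  apply D.vc_cancel (A := D.hc A C)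
  · rw [D.vi_t]
  · rw [D.hc_b _ _ h, D.hc_t _ _ hvi, D.vi_t, D.vi_t]
  · rw [D.vc_vi, D.interchange _ _ _ _ h hvi hbA hbC, D.vc_vi, D.vc_vi,
        D.idv_mulH _ _ hH, ← D.hc_t _ _ h]

end DGpd
namespace DGpd

variable {B V H P : Type*} (D : DGpd B V H P)

lemma core_pq {E : B} {p p' : P} (hEt : D.t E = D.idH p) (hEr : D.r E = D.idV p') :
    p = p' := by
  have := D.corner_tr E
  rwa [hEt, hEr, D.eH_id, D.sV_id] at this

lemma core_cond {E F : B} {p : P} (hEr : D.r E = D.idV p) (hFb : D.sH (D.b F) = p) :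
    D.r E = D.l (D.idv (D.b F)) := by rw [D.idv_l, hFb, hEr]

lemma core_bb {E F : B} {p : P} (hEr : D.r E = D.idV p) (hFb : D.sH (D.b F) = p) :
    D.eH (D.b E) = D.sH (D.b F) := by rw [D.corner_br, hEr, D.eV_id, hFb]

lemma core_mid {E F : B} {p : P} (hEt : D.t E = D.idH p) (hEr : D.r E = D.idV p)
    (hFb : D.sH (D.b F) = p) :
    D.b (D.hc (D.idh (D.l F)) F) = D.t (D.hc E (D.idv (D.b F))) := by
  rw [D.hc_b _ _ (D.idh_r (D.l F)), D.hc_t _ _ (D.core_cond hEr hFb),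
      D.idh_b, hEt, D.idv_t, ← D.corner_bl F, hFb]

section
variable {E F : B} {p q : P}
variable (hEt : D.t E = D.idH p) (hEr : D.r E = D.idV p)
variable (hFt : D.t F = D.idH q) (hFr : D.r F = D.idV q)
variable (hFb : D.sH (D.b F) = p)

include hEt hEr hFb

lemma coreMul_t (hFt : D.t F = D.idH q) : D.t (D.coreMul E F) = D.idH q := by
  show D.t (D.vc (D.hc (D.idh (D.l F)) F) (D.hc E (D.idv (D.b F)))) = D.idH q
  rw [D.vc_t _ _ (D.core_mid hEt hEr hFb), D.hc_t _ _ (D.idh_r (D.l F)),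
      D.idh_t, ← D.corner_tl F, D.idH_mul, hFt]

lemma coreMul_r (hFr : D.r F = D.idV q) : D.r (D.coreMul E F) = D.idV q := by
  have h2 : D.mulV (D.idV q) (D.idV q) = D.idV q := by
    have := D.mulV_id (D.idV q); rwa [D.eV_id] at this
  show D.r (D.vc (D.hc (D.idh (D.l F)) F) (D.hc E (D.idv (D.b F)))) = D.idV q
  rw [D.vc_r _ _ (D.core_mid hEt hEr hFb), D.hc_r _ _ (D.idh_r (D.l F)),
      D.hc_r _ _ (D.core_cond hEr hFb), D.idv_r, D.corner_br F, hFr, D.eV_id, h2]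

lemma coreMul_b : D.b (D.coreMul E F) = D.mulH (D.b E) (D.b F) := by
  show D.b (D.vc (D.hc (D.idh (D.l F)) F) (D.hc E (D.idv (D.b F)))) = _
  rw [D.vc_b _ _ (D.core_mid hEt hEr hFb), D.hc_b _ _ (D.core_cond hEr hFb), D.idv_b]

lemma coreMul_l : D.l (D.coreMul E F) = D.mulV (D.l F) (D.l E) := by
  show D.l (D.vc (D.hc (D.idh (D.l F)) F) (D.hc E (D.idv (D.b F)))) = _
  rw [D.vc_l _ _ (D.core_mid hEt hEr hFb), D.hc_l _ _ (D.idh_r (D.l F)),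
      D.hc_l _ _ (D.core_cond hEr hFb), D.idh_l]

end

end DGpd
namespace DGpd

variable {B V H P : Type*} (D : DGpd B V H P)

lemma core_one_mul (E : B) : D.coreMul (D.Theta (D.coreSrc E)) E = E := by
  show D.vc (D.hc (D.idh (D.l E)) E)
      (D.hc (D.idh (D.idV (D.sH (D.b E)))) (D.idv (D.b E))) = E
  have h1 : D.hc (D.idh (D.idV (D.sH (D.b E)))) (D.idv (D.b E)) = D.idv (D.b E) := by
    rw [D.id_id, D.idv_mulH _ _ (by rw [D.eH_id]), D.idH_mul]
  rw [D.idh_hc, h1, D.vc_idv]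

lemma core_mul_one (E : B) (q : P) (hEt : D.t E = D.idH q) (hEr : D.r E = D.idV q) :
    D.coreMul E (D.Theta q) = E := by
  show D.vc (D.hc (D.idh (D.l (D.idh (D.idV q)))) (D.idh (D.idV q)))
      (D.hc E (D.idv (D.b (D.idh (D.idV q))))) = E
  have h2 : D.hc E (D.idh (D.idV q)) = E := by rw [← hEr]; exact D.hc_idh E
  rw [D.idh_hc, D.idh_b, D.eV_id, ← D.id_id, h2, D.id_id, ← hEt, D.idv_vc]

section
variable {E : B} {p : P}
variable (hEt : D.t E = D.idH p) (hEr : D.r E = D.idV p)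

include hEt hEr

omit hEt in
lemma coreInv_cond : D.r E = D.l (D.idv (D.invH (D.b E))) := by
  rw [D.idv_l, D.sH_inv, D.corner_br, hEr, D.eV_id]

omit hEt in
lemma coreInv_t : D.t (D.coreInv E) = D.idH (D.sH (D.b E)) := by
  show D.t (D.vi (D.hc E (D.idv (D.invH (D.b E))))) = _
  rw [D.vi_t, D.hc_b _ _ (D.coreInv_cond hEr), D.idv_b, D.mulH_inv]

lemma coreInv_b : D.b (D.coreInv E) = D.invH (D.b E) := by
  have hp : D.sH (D.invH (D.b E)) = p := by
    rw [D.sH_inv, D.corner_br, hEr, D.eV_id]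
  show D.b (D.vi (D.hc E (D.idv (D.invH (D.b E))))) = _
  rw [D.vi_b, D.hc_t _ _ (D.coreInv_cond hEr), hEt, D.idv_t, ← hp, D.idH_mul]

omit hEt in
lemma coreInv_r : D.r (D.coreInv E) = D.idV (D.sH (D.b E)) := by
  show D.r (D.vi (D.hc E (D.idv (D.invH (D.b E))))) = _
  rw [D.vi_r, D.hc_r _ _ (D.coreInv_cond hEr), D.idv_r, D.eH_inv, D.invV_id]

lemma core_mul_inv : D.coreMul E (D.coreInv E) = D.Theta (D.coreSrc E) := by
  have cX := D.coreInv_cond hEr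
  have lX : D.l (D.hc E (D.idv (D.invH (D.b E)))) = D.l E := D.hc_l _ _ cX
  have bX : D.b (D.hc E (D.idv (D.invH (D.b E)))) = D.idH (D.sH (D.b E)) := by
    rw [D.hc_b _ _ cX, D.idv_b, D.mulH_inv]
  show D.vc (D.hc (D.idh (D.l (D.coreInv E))) (D.coreInv E))
      (D.hc E (D.idv (D.b (D.coreInv E)))) = D.Theta (D.coreSrc E)
  have hlvi : D.l (D.coreInv E) = D.invV (D.l E) := by
    show D.l (D.vi (D.hc E (D.idv (D.invH (D.b E))))) = _
    rw [D.vi_l, lX]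
  have htop : D.hc (D.idh (D.l (D.coreInv E))) (D.coreInv E) = D.coreInv E := by
    rw [hlvi]
    show D.hc (D.idh (D.invV (D.l E))) (D.vi (D.hc E (D.idv (D.invH (D.b E))))) = _
    rw [← D.vi_idh, ← D.vi_hc _ _ (by rw [D.idh_r, lX]), ← lX, D.idh_hc]
    rfl
  rw [htop, D.coreInv_b hEt hEr]
  show D.vc (D.vi (D.hc E (D.idv (D.invH (D.b E)))))
      (D.hc E (D.idv (D.invH (D.b E)))) = _
  rw [D.vi_vc, bX, ← D.id_id]
  rfl

lemma core_inv_mul : D.coreMul (D.coreInv E) E = D.Theta p := by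
  have cX := D.coreInv_cond hEr
  have rX : D.r (D.hc E (D.idv (D.invH (D.b E)))) = D.idV (D.sH (D.b E)) := by
    rw [D.hc_r _ _ cX, D.idv_r, D.eH_inv]
  have hbot : D.hc (D.coreInv E) (D.idv (D.b E)) = D.vi E := by
    show D.hc (D.vi (D.hc E (D.idv (D.invH (D.b E))))) (D.idv (D.b E)) = _
    have key : D.hc (D.hc E (D.idv (D.invH (D.b E)))) (D.idv (D.b E)) = E := by
      rw [D.hc_assoc _ _ _ cX (by rw [D.idv_r, D.idv_l, D.eH_inv]),
          D.idv_mulH _ _ (D.eH_inv (D.b E)), D.invH_mul, ← D.id_id,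
          D.corner_br, hEr, D.eV_id, ← hEr, D.hc_idh]
    rw [← D.vi_idv (D.b E), ← D.vi_hc _ _ (by rw [rX, D.idv_l]), key]
  show D.vc (D.hc (D.idh (D.l E)) E) (D.hc (D.coreInv E) (D.idv (D.b E))) = _
  rw [D.idh_hc, hbot, D.vc_vi, hEt, ← D.id_id]
  rfl

end

end DGpd
namespace DGpd

variable {B V H P : Type*} (D : DGpd B V H P)

lemma core_assoc (E F G : B) (p q : P)
    (hEt : D.t E = D.idH p) (hEr : D.r E = D.idV p)
    (hFt : D.t F = D.idH q) (hFr : D.r F = D.idV q)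
    (hFb : D.sH (D.b F) = p) (hGb : D.sH (D.b G) = q) :
    D.coreMul (D.coreMul E F) G = D.coreMul E (D.coreMul F G) := by
  have cF : D.r E = D.l (D.idv (D.b F)) := D.core_cond hEr hFb
  have cG : D.r F = D.l (D.idv (D.b G)) := D.core_cond hFr hGb
  have midEF : D.b (D.hc (D.idh (D.l F)) F) = D.t (D.hc E (D.idv (D.b F))) :=
    D.core_mid hEt hEr hFb
  have midFG : D.b (D.hc (D.idh (D.l G)) G) = D.t (D.hc F (D.idv (D.b G))) :=
    D.core_mid hFt hFr hGb
  have bA1 : D.b (D.hc (D.idh (D.l F)) F) = D.b F := by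
    rw [D.hc_b _ _ (D.idh_r _), D.idh_b, ← D.corner_bl F, D.idH_mul]
  have tA1 : D.t (D.hc (D.idh (D.l F)) F) = D.idH q := by
    rw [D.hc_t _ _ (D.idh_r _), D.idh_t, ← D.corner_tl F, D.idH_mul, hFt]
  have rA1 : D.r (D.hc (D.idh (D.l F)) F) = D.idV q := by
    rw [D.hc_r _ _ (D.idh_r _), hFr]
  have tA2 : D.t (D.hc E (D.idv (D.b F))) = D.b F := by
    rw [D.hc_t _ _ cF, hEt, D.idv_t, ← hFb, D.idH_mul]
  have rA2 : D.r (D.hc E (D.idv (D.b F))) = D.idV q := by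
    rw [D.hc_r _ _ cF, D.idv_r, D.corner_br F, hFr, D.eV_id]
  have bA1' : D.b (D.hc (D.idh (D.l G)) G) = D.b G := by
    rw [D.hc_b _ _ (D.idh_r _), D.idh_b, ← D.corner_bl G, D.idH_mul]
  have lA1' : D.l (D.hc (D.idh (D.l G)) G) = D.l G := by
    rw [D.hc_l _ _ (D.idh_r _), D.idh_l]
  have lA2' : D.l (D.hc F (D.idv (D.b G))) = D.l F := D.hc_l _ _ cG
  have c1 : D.r (D.hc (D.idh (D.l F)) F) = D.l (D.idv (D.b G)) := by
    rw [rA1, D.idv_l, hGb]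
  have c2 : D.r (D.hc E (D.idv (D.b F))) = D.l (D.idv (D.b G)) := by
    rw [rA2, D.idv_l, hGb]
  have cvv : D.r (D.idv (D.b F)) = D.l (D.idv (D.b G)) := by
    rw [D.idv_r, D.idv_l, D.core_bb hFr hGb]
  have idvbG : D.vc (D.idv (D.b G)) (D.idv (D.b G)) = D.idv (D.b G) := by
    have := D.vc_idv (D.idv (D.b G)); rwa [D.idv_b] at this
  have tX1 : D.t (D.hc (D.hc (D.idh (D.l F)) F) (D.idv (D.b G))) = D.b G := by
    rw [D.hc_t _ _ c1, tA1, D.idv_t, ← hGb, D.idH_mul]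
  have bX1 : D.b (D.hc (D.hc (D.idh (D.l F)) F) (D.idv (D.b G)))
      = D.mulH (D.b F) (D.b G) := by
    rw [D.hc_b _ _ c1, bA1, D.idv_b]
  have tX2 : D.t (D.hc (D.hc E (D.idv (D.b F))) (D.idv (D.b G)))
      = D.mulH (D.b F) (D.b G) := by
    rw [D.hc_t _ _ c2, tA2, D.idv_t]
  have X2eq : D.hc (D.hc E (D.idv (D.b F))) (D.idv (D.b G))
      = D.hc E (D.idv (D.mulH (D.b F) (D.b G))) := by
    rw [D.hc_assoc _ _ _ cF cvv, D.idv_mulH _ _ (D.core_bb hFr hGb)]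
  have hcM : D.hc (D.vc (D.hc (D.idh (D.l F)) F) (D.hc E (D.idv (D.b F)))) (D.idv (D.b G))
      = D.vc (D.hc (D.hc (D.idh (D.l F)) F) (D.idv (D.b G)))
          (D.hc (D.hc E (D.idv (D.b F))) (D.idv (D.b G))) := by
    conv_lhs => rw [← idvbG]
    rw [← D.interchange _ _ _ _ c1 c2 midEF (by rw [D.idv_b, D.idv_t])]
  have stepL : D.coreMul (D.coreMul E F) G =
      D.vc (D.vc (D.hc (D.idh (D.l G)) G) (D.hc (D.hc (D.idh (D.l F)) F) (D.idv (D.b G))))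
        (D.hc (D.hc E (D.idv (D.b F))) (D.idv (D.b G))) := by
    show D.vc (D.hc (D.idh (D.l G)) G)
        (D.hc (D.vc (D.hc (D.idh (D.l F)) F) (D.hc E (D.idv (D.b F)))) (D.idv (D.b G))) = _
    rw [hcM, ← D.vc_assoc _ _ _ (by rw [bA1', tX1]) (bX1.trans tX2.symm)]
  have cglf : D.eV (D.l G) = D.sV (D.l F) := by
    rw [← D.corner_bl G, ← D.corner_tl F, hGb, hFt, D.sH_id]
  have R3 : D.hc (D.idh (D.l G)) (D.hc (D.idh (D.l G)) G) = D.hc (D.idh (D.l G)) G := by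
    have := D.idh_hc (D.hc (D.idh (D.l G)) G); rwa [lA1'] at this
  have R4 : D.hc (D.idh (D.l F)) (D.hc F (D.idv (D.b G)))
      = D.hc (D.hc (D.idh (D.l F)) F) (D.idv (D.b G)) :=
    (D.hc_assoc _ _ _ (D.idh_r _) cG).symm
  have stepR : D.coreMul E (D.coreMul F G) =
      D.vc (D.vc (D.hc (D.idh (D.l G)) G) (D.hc (D.hc (D.idh (D.l F)) F) (D.idv (D.b G))))
        (D.hc E (D.idv (D.mulH (D.b F) (D.b G)))) := by
    show D.vc (D.hc (D.idh (D.l (D.coreMul F G))) (D.coreMul F G))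
        (D.hc E (D.idv (D.b (D.coreMul F G)))) = _
    rw [D.coreMul_l hFt hFr hGb, D.coreMul_b hFt hFr hGb,
        show D.coreMul F G = D.vc (D.hc (D.idh (D.l G)) G) (D.hc F (D.idv (D.b G))) from rfl,
        ← D.idh_mulV _ _ cglf,
        ← D.interchange _ _ _ _ (by rw [D.idh_r, lA1']) (by rw [D.idh_r, lA2'])
          (by rw [D.idh_b, D.idh_t, cglf]) midFG,
        R3, R4]
  rw [stepL, stepR, X2eq]

end DGpd

/-- The core of a double groupoid is a groupoid: the set of boxes `E`
with `t(E), r(E) ∈ P`, equipped with source `bl`, target `tr`, identities `Θ_p`,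
the core multiplication and the core inverse, satisfies the groupoid axioms. -/
theorem core_is_groupoid {B V H P : Type*} (D : DGpd B V H P) :
    -- closure and compatibility of sources/targets under multiplication
    (∀ E F, D.IsCore E → D.IsCore F → D.coreTgt E = D.coreSrc F →
      D.IsCore (D.coreMul E F) ∧ D.coreSrc (D.coreMul E F) = D.coreSrc E ∧
        D.coreTgt (D.coreMul E F) = D.coreTgt F) ∧
    -- the identities Θ_p
    (∀ p : P, D.IsCore (D.Theta p) ∧ D.coreSrc (D.Theta p) = p ∧
      D.coreTgt (D.Theta p) = p) ∧
    -- associativity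
    (∀ E F G, D.IsCore E → D.IsCore F → D.IsCore G →
      D.coreTgt E = D.coreSrc F → D.coreTgt F = D.coreSrc G →
      D.coreMul (D.coreMul E F) G = D.coreMul E (D.coreMul F G)) ∧
    -- unit laws
    (∀ E, D.IsCore E → D.coreMul (D.Theta (D.coreSrc E)) E = E ∧
      D.coreMul E (D.Theta (D.coreTgt E)) = E) ∧
    -- inverse laws
    (∀ E, D.IsCore E → D.IsCore (D.coreInv E) ∧
      D.coreSrc (D.coreInv E) = D.coreTgt E ∧
      D.coreTgt (D.coreInv E) = D.coreSrc E ∧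
      D.coreMul E (D.coreInv E) = D.Theta (D.coreSrc E) ∧
      D.coreMul (D.coreInv E) E = D.Theta (D.coreTgt E)) := by
  refine ⟨?_, ?_, ?_, ?_, ?_⟩
  · -- closure
    rintro E F ⟨⟨p, hEt⟩, ⟨p', hEr⟩⟩ ⟨⟨q, hFt⟩, ⟨q', hFr⟩⟩ hst
    obtain rfl : p = p' := D.core_pq hEt hEr
    obtain rfl : q = q' := D.core_pq hFt hFr
    have hFb : D.sH (D.b F) = p := by
      have h := hst.symm
      show _ = p
      rw [show (p : P) = D.eH (D.t E) from by rw [hEt, D.eH_id]]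
      exact h
    refine ⟨⟨⟨q, D.coreMul_t hEt hEr hFb hFt⟩, ⟨q, D.coreMul_r hEt hEr hFb hFr⟩⟩, ?_, ?_⟩
    · show D.sH (D.b (D.coreMul E F)) = D.sH (D.b E)
      rw [D.coreMul_b hEt hEr hFb, D.sH_mul _ _ (D.core_bb hEr hFb)]
    · show D.eH (D.t (D.coreMul E F)) = D.eH (D.t F)
      rw [D.coreMul_t hEt hEr hFb hFt, hFt]
  · -- identities
    intro p
    have tTh : D.t (D.Theta p) = D.idH p := by
      show D.t (D.idh (D.idV p)) = _
      rw [D.idh_t, D.sV_id]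
    have rTh : D.r (D.Theta p) = D.idV p := D.idh_r _
    refine ⟨⟨⟨p, tTh⟩, ⟨p, rTh⟩⟩, ?_, ?_⟩
    · show D.sH (D.b (D.idh (D.idV p))) = p
      rw [D.idh_b, D.eV_id, D.sH_id]
    · show D.eH (D.t (D.idh (D.idV p))) = p
      rw [D.idh_t, D.sV_id, D.eH_id]
  · -- associativity
    rintro E F G ⟨⟨p, hEt⟩, ⟨p', hEr⟩⟩ ⟨⟨q, hFt⟩, ⟨q', hFr⟩⟩ - h1 h2
    obtain rfl : p = p' := D.core_pq hEt hEr
    obtain rfl : q = q' := D.core_pq hFt hFr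
    have hFb : D.sH (D.b F) = p := by
      show _ = p
      rw [show (p : P) = D.eH (D.t E) from by rw [hEt, D.eH_id]]
      exact h1.symm
    have hGb : D.sH (D.b G) = q := by
      show _ = q
      rw [show (q : P) = D.eH (D.t F) from by rw [hFt, D.eH_id]]
      exact h2.symm
    exact D.core_assoc E F G p q hEt hEr hFt hFr hFb hGb
  · -- unit laws
    rintro E ⟨⟨p, hEt⟩, ⟨p', hEr⟩⟩
    obtain rfl : p = p' := D.core_pq hEt hEr
    have htgt : D.coreTgt E = p := by
      show D.eH (D.t E) = p
      rw [hEt, D.eH_id]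
    exact ⟨D.core_one_mul E, by rw [htgt]; exact D.core_mul_one E p hEt hEr⟩
  · -- inverse laws
    rintro E ⟨⟨p, hEt⟩, ⟨p', hEr⟩⟩
    obtain rfl : p = p' := D.core_pq hEt hEr
    have htgt : D.coreTgt E = p := by
      show D.eH (D.t E) = p
      rw [hEt, D.eH_id]
    refine ⟨⟨⟨D.sH (D.b E), D.coreInv_t hEr⟩, ⟨D.sH (D.b E), D.coreInv_r hEr⟩⟩,
        ?_, ?_, D.core_mul_inv hEt hEr, by rw [htgt]; exact D.core_inv_mul hEt hEr⟩
    · show D.sH (D.b (D.coreInv E)) = D.eH (D.t E)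
      rw [D.coreInv_b hEt hEr, D.sH_inv, D.corner_br, hEr, D.eV_id, hEt, D.eH_id]
    · show D.eH (D.t (D.coreInv E)) = D.sH (D.b E)
      rw [D.coreInv_t hEr, D.eH_id]
end

section
/- Any module over a double groupoid is also a module over the core groupoid of the double groupoid: given a left action of a double groupoid (F; V, H; P) along ε: E → P, the formula E·X := l(E)^{-1}·(t(E)·X) (for E in the core, X ∈ E with ε(X) = tr(E)) defines a left action of the core groupoid E(F) on E. -/
section Stmt4

variable {B V H P E : Type*}

/-- A left action of a double groupoid `(F; V, H; P)` along `ε : E → P`: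
left actions of the groupoids `V` and `H` on `ε`, compatible via
`l(A)⁻¹·(t(A)·X) = b(A)·(r(A)⁻¹·X)`. -/
structure DGpdAction (D : DGpd B V H P) (eps : E → P) where
  aV : V → E → E
  aH : H → E → E
  aV_eps : ∀ g y, eps y = D.eV g → eps (aV g y) = D.sV g
  aV_id : ∀ y, aV (D.idV (eps y)) y = y
  aV_mul : ∀ g h y, D.eV g = D.sV h → eps y = D.eV h →
    aV (D.mulV g h) y = aV g (aV h y)
  aH_eps : ∀ x y, eps y = D.eH x → eps (aH x y) = D.sH x
  aH_id : ∀ y, aH (D.idH (eps y)) y = y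
  aH_mul : ∀ x x' y, D.eH x = D.sH x' → eps y = D.eH x' →
    aH (D.mulH x x') y = aH x (aH x' y)
  compat : ∀ A y, eps y = D.eH (D.t A) →
    aV (D.invV (D.l A)) (aH (D.t A) y) = aH (D.b A) (aV (D.invV (D.r A)) y)

/-- The induced action of the core groupoid: `E · X := l(E)⁻¹·(t(E)·X)`. -/
def coreActMod {D : DGpd B V H P} {eps : E → P} (ac : DGpdAction D eps)
    (A : B) (y : E) : E :=
  ac.aV (D.invV (D.l A)) (ac.aH (D.t A) y)

theorem DGpd_invV_id (D : DGpd B V H P) (p : P) : D.invV (D.idV p) = D.idV p := by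
  have h1 : D.mulV (D.idV p) (D.invV (D.idV p)) = D.invV (D.idV p) := by
    have := D.idV_mul (D.invV (D.idV p))
    rwa [D.sV_inv, D.eV_id] at this
  have h2 : D.mulV (D.idV p) (D.invV (D.idV p)) = D.idV p := by
    rw [D.mulV_inv, D.sV_id]
  rw [← h1, h2]

theorem DGpd_invV_mulV (D : DGpd B V H P) (g h : V) (hc : D.eV g = D.sV h) :
    D.invV (D.mulV g h) = D.mulV (D.invV h) (D.invV g) := by
  set m := D.mulV g h with hm
  set X := D.mulV (D.invV h) (D.invV g) with hX
  have hsX : D.sV X = D.eV h := by rw [hX, D.sV_mul _ _ (by rw [D.eV_inv, D.sV_inv, hc]), D.sV_inv]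
  have hem : D.eV m = D.eV h := D.eV_mul g h hc
  have hsm : D.sV m = D.sV g := D.sV_mul g h hc
  have hmX : D.mulV m X = D.idV (D.sV g) := by
    rw [hm, hX, D.mulV_assoc g h _ hc (by rw [hsX])]
    rw [← D.mulV_assoc h (D.invV h) (D.invV g) (by rw [D.sV_inv]) (by rw [D.eV_inv, D.sV_inv, hc])]
    rw [D.mulV_inv h]
    have : D.mulV (D.idV (D.sV h)) (D.invV g) = D.invV g := by
      have := D.idV_mul (D.invV g); rwa [D.sV_inv, hc] at this
    rw [this, D.mulV_inv]
  calc D.invV m = D.mulV (D.invV m) (D.idV (D.sV g)) := by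
        have := D.mulV_id (D.invV m); rw [D.eV_inv, hsm] at this; exact this.symm
    _ = D.mulV (D.invV m) (D.mulV m X) := by rw [hmX]
    _ = D.mulV (D.mulV (D.invV m) m) X := by
        rw [D.mulV_assoc (D.invV m) m X (by rw [D.eV_inv]) (by rw [hsX, hem])]
    _ = X := by
        rw [D.invV_mul m]
        have := D.idV_mul X; rwa [hsX, ← hem] at this

/-- Any module over a double groupoid is also a module over the core
groupoid: the formula `E·X := l(E)⁻¹·(t(E)·X)` defines a left action of the core
groupoid `E(F)` along `ε`. -/
theorem core_groupoid_acts_on_module (D : DGpd B V H P) (eps : E → P)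
    (ac : DGpdAction D eps) :
    (∀ A y, D.IsCore A → eps y = D.coreTgt A →
      eps (coreActMod ac A y) = D.coreSrc A) ∧
    (∀ (p : P) y, eps y = p → coreActMod ac (D.Theta p) y = y) ∧
    (∀ A A' y, D.IsCore A → D.IsCore A' → D.coreTgt A = D.coreSrc A' →
      eps y = D.coreTgt A' →
      coreActMod ac (D.coreMul A A') y = coreActMod ac A (coreActMod ac A' y)) := by
  refine ⟨?_, ?_, ?_⟩
  · intro A y _ hy
    unfold coreActMod DGpd.coreSrc
    unfold DGpd.coreTgt at hy
    have h1 : eps (ac.aH (D.t A) y) = D.sH (D.t A) := ac.aH_eps _ _ hy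
    rw [ac.aV_eps _ _ (by rw [h1, D.eV_inv]; exact D.corner_tl A), D.sV_inv,
      ← D.corner_bl A]
  · intro p y hy
    unfold coreActMod DGpd.Theta
    rw [D.idh_t, D.idh_l, D.sV_id, DGpd_invV_id]
    have h1 : ac.aH (D.idH p) y = y := by rw [← hy]; exact ac.aH_id y
    rw [h1, ← hy, ac.aV_id]
  · intro A A' y hA hA' htgt hy
    obtain ⟨⟨p, hpt⟩, ⟨q, hqr⟩⟩ := hA
    unfold DGpd.coreTgt DGpd.coreSrc at htgt
    unfold DGpd.coreTgt at hy
    have hp : p = D.sH (D.b A') := by rw [← htgt, hpt, D.eH_id]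
    have hq : q = D.sH (D.b A') := by
      have h := D.corner_tr A
      rw [hpt, hqr, D.eH_id, D.sV_id] at h
      rw [← h, hp]
    have hK : D.r (D.idh (D.l A')) = D.l A' := D.idh_r _
    have hL : D.r A = D.l (D.idv (D.b A')) := by rw [hqr, D.idv_l, hq]
    have hKL : D.b (D.hc (D.idh (D.l A')) A') = D.t (D.hc A (D.idv (D.b A'))) := by
      rw [D.hc_b _ _ hK, D.idh_b, ← D.corner_bl A', D.idH_mul,
        D.hc_t _ _ hL, D.idv_t, hpt, hp, D.idH_mul]
    have htM : D.t (D.coreMul A A') = D.t A' := by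
      unfold DGpd.coreMul
      rw [D.vc_t _ _ hKL, D.hc_t _ _ hK, D.idh_t, ← D.corner_tl A', D.idH_mul]
    have hlM : D.l (D.coreMul A A') = D.mulV (D.l A') (D.l A) := by
      unfold DGpd.coreMul
      rw [D.vc_l _ _ hKL, D.hc_l _ _ hK, D.idh_l, D.hc_l _ _ hL]
    have hcomp : D.eV (D.l A') = D.sV (D.l A) := by
      rw [← D.corner_bl A', ← D.corner_tl A, hpt, D.sH_id, hp]
    have hepsY : eps (ac.aH (D.t A') y) = D.sH (D.t A') := ac.aH_eps _ _ hy
    have cond3 : eps (ac.aH (D.t A') y) = D.eV (D.invV (D.l A')) := by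
      rw [hepsY, D.eV_inv]; exact D.corner_tl A'
    have hZ : eps (ac.aV (D.invV (D.l A')) (ac.aH (D.t A') y)) = p := by
      rw [ac.aV_eps _ _ cond3, D.sV_inv, ← D.corner_bl A']; exact hp.symm
    unfold coreActMod
    rw [htM, hlM, DGpd_invV_mulV D _ _ hcomp]
    rw [ac.aV_mul _ _ _ (by rw [D.eV_inv, D.sV_inv]; exact hcomp.symm) cond3]
    congr 1
    have h2 : ac.aH (D.t A) (ac.aV (D.invV (D.l A')) (ac.aH (D.t A') y))
        = ac.aV (D.invV (D.l A')) (ac.aH (D.t A') y) := by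
      rw [hpt, ← hZ]; exact ac.aH_id _
    rw [h2]

end Stmt4
end

section
/- The vertical and horizontal coboundary maps of the double complex of a double groupoid commute: for all r, s ≥ 0, d_V∘d_H = d_H∘d_V as maps D^{r,s} → D^{r+1,s+1}, where D^{r,s} consists of normalized K-valued functions on the set F^{(r,s)} of composable r×s matrices of boxes. -/
/-- A bundle of abelian groups over `P`, presented with globally defined (partial in
spirit) operations: all group axioms are required fiberwise. -/
structure AbBundle (P : Type*) (K : Type*) where
  proj : K → P
  add : K → K → K
  zero : P → K
  neg : K → K
  proj_add : ∀ a b, proj a = proj b → proj (add a b) = proj a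
  proj_zero : ∀ p, proj (zero p) = p
  proj_neg : ∀ a, proj (neg a) = proj a
  add_assoc : ∀ a b c, proj a = proj b → proj b = proj c →
    add (add a b) c = add a (add b c)
  add_comm : ∀ a b, proj a = proj b → add a b = add b a
  zero_add : ∀ a, add (zero (proj a)) a = a
  add_neg : ∀ a, add a (neg a) = zero (proj a)

namespace AbBundle

variable {P K : Type*} (Kb : AbBundle P K)

/-- Subtraction in the bundle. -/
def sub (a b : K) : K := Kb.add a (Kb.neg b)

end AbBundle

/-- An action of a double groupoid `(B; V, H; P)` on an abelian group bundle
`K → P`: the groupoids `V` and `H` act by group bundle automorphisms, compatibly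
via `l(A)⁻¹·(t(A)·k) = b(A)·(r(A)⁻¹·k)`; i.e. `K` is a module over the double
groupoid. -/
structure DAction {B V H P K : Type*} (D : DGpd B V H P) (Kb : AbBundle P K) where
  aV : V → K → K
  aH : H → K → K
  aV_proj : ∀ g k, Kb.proj k = D.eV g → Kb.proj (aV g k) = D.sV g
  aV_id : ∀ k, aV (D.idV (Kb.proj k)) k = k
  aV_mul : ∀ g h k, D.eV g = D.sV h → Kb.proj k = D.eV h →
    aV (D.mulV g h) k = aV g (aV h k)
  aV_add : ∀ g k k', Kb.proj k = Kb.proj k' → Kb.proj k = D.eV g →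
    aV g (Kb.add k k') = Kb.add (aV g k) (aV g k')
  aV_zero : ∀ g, aV g (Kb.zero (D.eV g)) = Kb.zero (D.sV g)
  aH_proj : ∀ x k, Kb.proj k = D.eH x → Kb.proj (aH x k) = D.sH x
  aH_id : ∀ k, aH (D.idH (Kb.proj k)) k = k
  aH_mul : ∀ x y k, D.eH x = D.sH y → Kb.proj k = D.eH y →
    aH (D.mulH x y) k = aH x (aH y k)
  aH_add : ∀ x k k', Kb.proj k = Kb.proj k' → Kb.proj k = D.eH x →
    aH x (Kb.add k k') = Kb.add (aH x k) (aH x k')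
  aH_zero : ∀ x, aH x (Kb.zero (D.eH x)) = Kb.zero (D.sH x)
  compat : ∀ A k, Kb.proj k = D.eH (D.t A) →
    aV (D.invV (D.l A)) (aH (D.t A) k) = aH (D.b A) (aV (D.invV (D.r A)) k)

section DComplex

variable {B V H P K : Type*} (D : DGpd B V H P) (Kb : AbBundle P K) (Ac : DAction D Kb)

/-- Sign twist `(-1)^k · a` inside the bundle. -/
def sgn (k : ℕ) (a : K) : K := if k % 2 = 0 then a else Kb.neg a

/-- Sum of a list of elements of a fixed fiber of the bundle. -/
def mySum (p : P) (l : List K) : K := l.foldr Kb.add (Kb.zero p)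

/-- Composability of a tuple `(x 0, …, x (s-1))` of horizontal arrows. -/
def HComp (s : ℕ) (x : ℕ → H) : Prop :=
  ∀ i, i + 1 < s → D.eH (x i) = D.sH (x (i + 1))

/-- Composability of a tuple `(g 0, …, g (r-1))` of vertical arrows. -/
def VComp (r : ℕ) (g : ℕ → V) : Prop :=
  ∀ i, i + 1 < r → D.eV (g i) = D.sV (g (i + 1))

/-- Composability of an `r × s` matrix of boxes: `F^{(r,s)}`. -/
def BComp (r s : ℕ) (M : ℕ → ℕ → B) : Prop :=
  (∀ i j, i < r → j + 1 < s → D.r (M i j) = D.l (M i (j + 1))) ∧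
  (∀ i j, i + 1 < r → j < s → D.b (M i j) = D.t (M (i + 1) j))

/-- Multiply the `k`-th and `(k+1)`-th entries of a tuple of horizontal arrows. -/
def mergeH (k : ℕ) (x : ℕ → H) : ℕ → H := fun j =>
  if j < k then x j else if j = k then D.mulH (x k) (x (k + 1)) else x (j + 1)

/-- Multiply the `k`-th and `(k+1)`-th entries of a tuple of vertical arrows. -/
def mergeV (k : ℕ) (g : ℕ → V) : ℕ → V := fun j =>
  if j < k then g j else if j = k then D.mulV (g k) (g (k + 1)) else g (j + 1)

/-- Horizontally compose the `k`-th and `(k+1)`-th columns of a matrix of boxes. -/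
def mergeCol (k : ℕ) (M : ℕ → ℕ → B) : ℕ → ℕ → B := fun i j =>
  if j < k then M i j else if j = k then D.hc (M i k) (M i (k + 1)) else M i (j + 1)

/-- Vertically compose the `k`-th and `(k+1)`-th rows of a matrix of boxes. -/
def mergeRow (k : ℕ) (M : ℕ → ℕ → B) : ℕ → ℕ → B := fun i j =>
  if i < k then M i j else if i = k then D.vc (M k j) (M (k + 1) j) else M (i + 1) j

/-- `d_H^{0,0} : D^{0,0} → D^{0,1}`. -/
def dH00 (a : P → K) : (ℕ → H) → K := fun x =>
  Kb.sub (Ac.aH (x 0) (a (D.eH (x 0)))) (a (D.sH (x 0)))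

/-- `d_V^{0,0} : D^{0,0} → D^{1,0}`. -/
def dV00 (a : P → K) : (ℕ → V) → K := fun g =>
  Kb.sub (a (D.eV (g 0))) (Ac.aV (D.invV (g 0)) (a (D.sV (g 0))))

/-- The bar differential `d_H^{0,m} : D^{0,m} → D^{0,m+1}` on `H`-cochains,
twisted by the `H`-action in the first face. -/
def dHbar (m : ℕ) (a : (ℕ → H) → K) : (ℕ → H) → K := fun x =>
  mySum Kb (D.sH (x 0))
    ((Ac.aH (x 0) (a (fun i => x (i + 1)))) ::
      (List.ofFn (fun i : Fin m => sgn Kb (i.val + 1) (a (mergeH D i.val x))) ++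
        [sgn Kb (m + 1) (a x)]))

/-- The bar differential `d_V^{m,0} : D^{m,0} → D^{m+1,0}` on `V`-cochains,
twisted by the `V`-action in the last face. -/
def dVbar (m : ℕ) (b : (ℕ → V) → K) : (ℕ → V) → K := fun g =>
  mySum Kb (D.eV (g m))
    ((b (fun i => g (i + 1))) ::
      (List.ofFn (fun i : Fin m => sgn Kb (i.val + 1) (b (mergeV D i.val g))) ++
        [sgn Kb (m + 1) (Ac.aV (D.invV (g m)) (b g))]))

/-- `d_V^{0,s} : D^{0,s} → D^{1,s}` (s ≥ 1). -/
def dV0s (a : (ℕ → H) → K) : (ℕ → ℕ → B) → K := fun M =>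
  Kb.sub (a (fun j => D.b (M 0 j)))
    (Ac.aV (D.invV (D.l (M 0 0))) (a (fun j => D.t (M 0 j))))

/-- `d_H^{r,0} : D^{r,0} → D^{r,1}` (r ≥ 1). -/
def dHr0 (r : ℕ) (b : (ℕ → V) → K) : (ℕ → ℕ → B) → K := fun M =>
  Kb.sub (Ac.aH (D.b (M (r - 1) 0)) (b (fun i => D.r (M i 0))))
    (b (fun i => D.l (M i 0)))

/-- The interior horizontal differential `d_H^{r,s} : D^{r,s} → D^{r,s+1}`
(for `r, s ≥ 1`; the output is evaluated on `r × (s+1)` matrices). -/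
def dHmat (r s : ℕ) (a : (ℕ → ℕ → B) → K) : (ℕ → ℕ → B) → K := fun M =>
  mySum Kb (D.eV (D.l (M (r - 1) 0)))
    ((Ac.aH (D.b (M (r - 1) 0)) (a (fun i j => M i (j + 1)))) ::
      (List.ofFn (fun j : Fin s => sgn Kb (j.val + 1) (a (mergeCol D j.val M))) ++
        [sgn Kb (s + 1) (a M)]))

/-- The interior vertical differential `d_V^{r,s} : D^{r,s} → D^{r+1,s}`
(for `r, s ≥ 1`; the output is evaluated on `(r+1) × s` matrices). -/
def dVmat (r s : ℕ) (a : (ℕ → ℕ → B) → K) : (ℕ → ℕ → B) → K := fun M =>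
  mySum Kb (D.eV (D.l (M r 0)))
    ((a (fun i j => M (i + 1) j)) ::
      (List.ofFn (fun i : Fin r => sgn Kb (i.val + 1) (a (mergeRow D i.val M))) ++
        [sgn Kb (r + 1) (Ac.aV (D.invV (D.l (M r 0))) (a M))]))

end DComplex

namespace Stmt5Aux

variable {B V H P K : Type*}

section FibGroup
variable {Kb : AbBundle P K}

/-- The fiber of the bundle over `p`, as a subtype. -/
def Fib (Kb : AbBundle P K) (p : P) : Type _ := {k : K // Kb.proj k = p}

variable {p q : P}

instance : Add (Fib Kb p) :=
  ⟨fun a b => ⟨Kb.add a.1 b.1, by rw [Kb.proj_add _ _ (a.2.trans b.2.symm), a.2]⟩⟩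
instance : Zero (Fib Kb p) := ⟨⟨Kb.zero p, Kb.proj_zero p⟩⟩
instance : Neg (Fib Kb p) := ⟨fun a => ⟨Kb.neg a.1, (Kb.proj_neg a.1).trans a.2⟩⟩

@[simp] lemma val_add' (a b : Fib Kb p) : (a + b).1 = Kb.add a.1 b.1 := rfl
@[simp] lemma val_neg' (a : Fib Kb p) : (-a).1 = Kb.neg a.1 := rfl
@[simp] lemma val_zero' : (0 : Fib Kb p).1 = Kb.zero p := rfl

instance : AddCommGroup (Fib Kb p) where
  add_assoc a b c := Subtype.ext (by
    show Kb.add (Kb.add a.1 b.1) c.1 = Kb.add a.1 (Kb.add b.1 c.1)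
    exact Kb.add_assoc _ _ _ (a.2.trans b.2.symm) (b.2.trans c.2.symm))
  zero_add a := Subtype.ext (by
    show Kb.add (Kb.zero p) a.1 = a.1
    have h := Kb.zero_add a.1; rw [a.2] at h; exact h)
  add_zero a := Subtype.ext (by
    show Kb.add a.1 (Kb.zero p) = a.1
    have hcm : Kb.add a.1 (Kb.zero p) = Kb.add (Kb.zero p) a.1 :=
      Kb.add_comm _ _ (by rw [a.2, Kb.proj_zero])
    rw [hcm]
    have h := Kb.zero_add a.1; rw [a.2] at h; exact h)
  nsmul := nsmulRec
  zsmul := zsmulRec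
  neg_add_cancel a := Subtype.ext (by
    show Kb.add (Kb.neg a.1) a.1 = Kb.zero p
    have hcm : Kb.add (Kb.neg a.1) a.1 = Kb.add a.1 (Kb.neg a.1) :=
      Kb.add_comm _ _ (by rw [Kb.proj_neg])
    rw [hcm, Kb.add_neg, a.2])
  add_comm a b := Subtype.ext (by
    show Kb.add a.1 b.1 = Kb.add b.1 a.1
    exact Kb.add_comm _ _ (a.2.trans b.2.symm))

@[simp] lemma val_add (a b : Fib Kb p) : (a + b).1 = Kb.add a.1 b.1 := rfl
@[simp] lemma val_neg (a : Fib Kb p) : (-a).1 = Kb.neg a.1 := rfl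
@[simp] lemma val_zero : (0 : Fib Kb p).1 = Kb.zero p := rfl
@[simp] lemma val_sub (a b : Fib Kb p) : (a - b).1 = Kb.sub a.1 b.1 := by
  rw [sub_eq_add_neg]; rfl

lemma val_sum (l : List (Fib Kb p)) :
    mySum Kb p (l.map Subtype.val) = (l.sum).1 := by
  induction l with
  | nil => rfl
  | cons a t ih => simp only [List.map_cons, List.sum_cons, mySum, List.foldr_cons, val_add]
                   rw [← ih]; rfl

/-- transport along an equality of base points -/
def castF (h : p = q) : Fib Kb p →+ Fib Kb q where
  toFun a := ⟨a.1, a.2.trans h⟩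
  map_zero' := Subtype.ext (by show Kb.zero p = Kb.zero q; rw [h])
  map_add' _ _ := rfl

@[simp] lemma castF_val (h : p = q) (a : Fib Kb p) : (castF h a).1 = a.1 := rfl

/-- sign as an operation on the fiber -/
def sgnF (k : ℕ) (a : Fib Kb p) : Fib Kb p := if k % 2 = 0 then a else -a

@[simp] lemma sgnF_val (k : ℕ) (a : Fib Kb p) : (sgnF k a).1 = sgn Kb k a.1 := by
  unfold sgnF sgn; split <;> rfl

lemma sgnF_add (k : ℕ) (a b : Fib Kb p) : sgnF k (a + b) = sgnF k a + sgnF k b := by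
  unfold sgnF; split <;> [rfl; exact neg_add a b]

lemma sgnF_neg (k : ℕ) (a : Fib Kb p) : sgnF k (-a) = -sgnF k a := by
  unfold sgnF; split <;> rfl

lemma sgnF_sub (k : ℕ) (a b : Fib Kb p) : sgnF k (a - b) = sgnF k a - sgnF k b := by
  simp only [sub_eq_add_neg, sgnF_add, sgnF_neg]

lemma sgnF_sum {n : ℕ} (k : ℕ) (f : Fin n → Fib Kb p) :
    sgnF k (∑ i, f i) = ∑ i, sgnF k (f i) := by
  unfold sgnF; split <;> simp

/-- The key expansion lemma: a `mySum` of the canonical shape equals the value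
of a sum in the fiber group. -/
lemma mySum_shape {n : ℕ} (h0 hl : K) (f : Fin n → K)
    (H0 : Fib Kb p) (F : Fin n → Fib Kb p) (HL : Fib Kb p)
    (e0 : h0 = H0.1) (ef : ∀ i, f i = (F i).1) (el : hl = HL.1) :
    mySum Kb p (h0 :: (List.ofFn f ++ [hl])) = (H0 + (∑ i, F i + HL)).1 := by
  have hlist : (h0 :: (List.ofFn f ++ [hl]))
      = (H0 :: (List.ofFn F ++ [HL])).map Subtype.val := by
    rw [e0, el, show f = (fun i => (F i).1) from funext ef]
    refine Eq.symm (Eq.trans (List.map_cons ..) ?_)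
    refine congrArg _ (Eq.trans (List.map_append ..) ?_)
    exact congrArg₂ _ (List.map_ofFn ..) rfl
  rw [hlist, val_sum]
  congr 1
  simp [List.sum_ofFn]
  rfl

end FibGroup

section ActMaps
variable {D : DGpd B V H P} {Kb : AbBundle P K} (Ac : DAction D Kb)

/-- The `H`-action as an additive map between fibers. -/
def hAct (x : H) {q : P} (h : D.sH x = q) : Fib Kb (D.eH x) →+ Fib Kb q where
  toFun k := ⟨Ac.aH x k.1, by rw [Ac.aH_proj x k.1 k.2, h]⟩
  map_zero' := Subtype.ext (by
    show Ac.aH x (Kb.zero (D.eH x)) = Kb.zero q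
    rw [Ac.aH_zero x, h])
  map_add' a b := Subtype.ext (Ac.aH_add x a.1 b.1 (a.2.trans b.2.symm) a.2)

@[simp] lemma hAct_val (x : H) {q : P} (h : D.sH x = q) (k : Fib Kb (D.eH x)) :
    (hAct Ac x h k).1 = Ac.aH x k.1 := rfl

/-- The `V`-action as an additive map between fibers. -/
def vAct (g : V) {q : P} (h : D.sV g = q) : Fib Kb (D.eV g) →+ Fib Kb q where
  toFun k := ⟨Ac.aV g k.1, by rw [Ac.aV_proj g k.1 k.2, h]⟩
  map_zero' := Subtype.ext (by
    show Ac.aV g (Kb.zero (D.eV g)) = Kb.zero q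
    rw [Ac.aV_zero g, h])
  map_add' a b := Subtype.ext (Ac.aV_add g a.1 b.1 (a.2.trans b.2.symm) a.2)

@[simp] lemma vAct_val (g : V) {q : P} (h : D.sV g = q) (k : Fib Kb (D.eV g)) :
    (vAct Ac g h k).1 = Ac.aV g k.1 := rfl

lemma hAct_sgnF (x : H) {q : P} (h : D.sH x = q) (k : ℕ) (a : Fib Kb (D.eH x)) :
    hAct Ac x h (sgnF k a) = sgnF k (hAct Ac x h a) := by
  unfold sgnF; split <;> simp

lemma vAct_sgnF (g : V) {q : P} (h : D.sV g = q) (k : ℕ) (a : Fib Kb (D.eV g)) :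
    vAct Ac g h (sgnF k a) = sgnF k (vAct Ac g h a) := by
  unfold sgnF; split <;> simp

end ActMaps

end Stmt5Aux
namespace Stmt5Aux
section Infra2
variable {B V H P K : Type*} {Kb : AbBundle P K} {p q : P}

lemma sgnF_swap (k m : ℕ) (a : Fib Kb p) : sgnF k (sgnF m a) = sgnF m (sgnF k a) := by
  unfold sgnF; split_ifs <;> simp

@[simp] lemma castF_castF (h1 : p = q) (h2 : q = p) (x : Fib Kb p) :
    castF h2 (castF h1 x) = x := Subtype.ext rfl

end Infra2
end Stmt5Aux
namespace Stmt5Aux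
section Mat
variable {B V H P K : Type*} (D : DGpd B V H P)

-- entry lemmas
lemma mergeCol_lt {k i j : ℕ} (M : ℕ → ℕ → B) (hj : j < k) : mergeCol D k M i j = M i j := if_pos hj
lemma mergeCol_self {k i : ℕ} (M : ℕ → ℕ → B) : mergeCol D k M i k = D.hc (M i k) (M i (k+1)) := by
  unfold mergeCol; rw [if_neg (lt_irrefl k), if_pos rfl]
lemma mergeCol_gt {k i j : ℕ} (M : ℕ → ℕ → B) (hj : k < j) : mergeCol D k M i j = M i (j+1) := by
  unfold mergeCol; rw [if_neg (by omega), if_neg (by omega)]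
lemma mergeRow_lt {k i j : ℕ} (M : ℕ → ℕ → B) (hi : i < k) : mergeRow D k M i j = M i j := if_pos hi
lemma mergeRow_self {k j : ℕ} (M : ℕ → ℕ → B) : mergeRow D k M k j = D.vc (M k j) (M (k+1) j) := by
  unfold mergeRow; rw [if_neg (lt_irrefl k), if_pos rfl]
lemma mergeRow_gt {k i j : ℕ} (M : ℕ → ℕ → B) (hi : k < i) : mergeRow D k M i j = M (i+1) j := by
  unfold mergeRow; rw [if_neg (by omega), if_neg (by omega)]

lemma bcomp_mono {r s r' s' : ℕ} {M : ℕ → ℕ → B} (h : BComp D r s M)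
    (hr : r' ≤ r) (hs : s' ≤ s) : BComp D r' s' M :=
  ⟨fun i j hi hj => h.1 i j (lt_of_lt_of_le hi hr) (lt_of_lt_of_le hj hs),
   fun i j hi hj => h.2 i j (lt_of_lt_of_le hi hr) (lt_of_lt_of_le hj hs)⟩

lemma bcomp_dropRow {r s : ℕ} {M : ℕ → ℕ → B} (h : BComp D (r+1) s M) :
    BComp D r s (fun i j => M (i+1) j) :=
  ⟨fun i j hi hj => h.1 (i+1) j (by omega) hj,
   fun i j hi hj => h.2 (i+1) j (by omega) hj⟩

lemma bcomp_dropCol {r s : ℕ} {M : ℕ → ℕ → B} (h : BComp D r (s+1) M) :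
    BComp D r s (fun i j => M i (j+1)) :=
  ⟨fun i j hi hj => h.1 i (j+1) hi (by omega),
   fun i j hi hj => h.2 i (j+1) hi (by omega)⟩

lemma bcomp_mergeCol {r s k : ℕ} {M : ℕ → ℕ → B} (hk : k + 1 < s + 1)
    (h : BComp D r (s+1) M) : BComp D r s (mergeCol D k M) := by
  constructor
  · intro i j hi hj
    rcases Nat.lt_trichotomy (j+1) k with h1 | h1 | h1
    · rw [mergeCol_lt D M (by omega), mergeCol_lt D M h1]
      exact h.1 i j hi (by omega)
    · rw [mergeCol_lt D M (by omega), h1, mergeCol_self,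
        D.hc_l _ _ (h.1 i k hi (by omega)), ← h1]
      exact h.1 i j hi (by omega)
    · rcases Nat.lt_or_ge k j with h2 | h2
      · rw [mergeCol_gt D M h2, mergeCol_gt D M (by omega)]
        exact h.1 i (j+1) hi (by omega)
      · have hj2 : j = k := by omega
        subst hj2
        rw [mergeCol_self, mergeCol_gt D M (by omega),
          D.hc_r _ _ (h.1 i j hi (by omega))]
        exact h.1 i (j+1) hi (by omega)
  · intro i j hi hj
    rcases Nat.lt_trichotomy j k with h1 | h1 | h1
    · rw [mergeCol_lt D M h1, mergeCol_lt D M h1]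
      exact h.2 i j hi (by omega)
    · subst h1
      rw [mergeCol_self, mergeCol_self,
        D.hc_b _ _ (h.1 i j (by omega) (by omega)),
        D.hc_t _ _ (h.1 (i+1) j (by omega) (by omega)),
        h.2 i j hi (by omega), h.2 i (j+1) hi (by omega)]
    · rw [mergeCol_gt D M h1, mergeCol_gt D M h1]
      exact h.2 i (j+1) hi (by omega)

lemma bcomp_mergeRow {r s k : ℕ} {M : ℕ → ℕ → B} (hk : k + 1 < r + 1)
    (h : BComp D (r+1) s M) : BComp D r s (mergeRow D k M) := by
  constructor
  · intro i j hi hj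
    rcases Nat.lt_trichotomy i k with h1 | h1 | h1
    · rw [mergeRow_lt D M h1, mergeRow_lt D M h1]
      exact h.1 i j (by omega) hj
    · subst h1
      rw [mergeRow_self, mergeRow_self,
        D.vc_r _ _ (h.2 i j (by omega) (by omega)),
        D.vc_l _ _ (h.2 i (j+1) (by omega) (by omega)),
        h.1 i j (by omega) hj, h.1 (i+1) j (by omega) hj]
    · rw [mergeRow_gt D M h1, mergeRow_gt D M h1]
      exact h.1 (i+1) j (by omega) hj
  · intro i j hi hj
    rcases Nat.lt_trichotomy (i+1) k with h1 | h1 | h1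
    · rw [mergeRow_lt D M (by omega), mergeRow_lt D M h1]
      exact h.2 i j (by omega) hj
    · rw [mergeRow_lt D M (by omega), h1, mergeRow_self,
        D.vc_t _ _ (h.2 k j (by omega) hj), ← h1]
      exact h.2 i j (by omega) hj
    · rcases Nat.lt_or_ge k i with h2 | h2
      · rw [mergeRow_gt D M h2, mergeRow_gt D M (by omega)]
        exact h.2 (i+1) j (by omega) hj
      · have hi2 : i = k := by omega
        subst hi2
        rw [mergeRow_self, mergeRow_gt D M (by omega),
          D.vc_b _ _ (h.2 i j (by omega) hj)]
        exact h.2 (i+1) j (by omega) hj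

lemma mergeRow_mergeCol_comm {r s i j : ℕ} {M : ℕ → ℕ → B} (hi : i + 1 < r) (hj : j + 1 < s)
    (h : BComp D r s M) :
    mergeRow D i (mergeCol D j M) = mergeCol D j (mergeRow D i M) := by
  funext a b
  rcases Nat.lt_trichotomy a i with ha | ha | ha
  · rw [mergeRow_lt D _ ha]
    rcases Nat.lt_trichotomy b j with hb | hb | hb
    · rw [mergeCol_lt D _ hb, mergeCol_lt D _ hb, mergeRow_lt D _ ha]
    · subst hb
      rw [mergeCol_self, mergeCol_self, mergeRow_lt D _ ha, mergeRow_lt D _ ha]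
    · rw [mergeCol_gt D _ hb, mergeCol_gt D _ hb, mergeRow_lt D _ ha]
  · subst ha
    rcases Nat.lt_trichotomy b j with hb | hb | hb
    · rw [mergeRow_self, mergeCol_lt D _ hb, mergeCol_lt D _ hb, mergeCol_lt D _ hb,
        mergeRow_self]
    · subst hb
      rw [mergeRow_self, mergeCol_self, mergeCol_self, mergeCol_self, mergeRow_self,
        mergeRow_self]
      exact D.interchange _ _ _ _ (h.1 a b (by omega) (by omega))
        (h.1 (a+1) b (by omega) (by omega)) (h.2 a b (by omega) (by omega))
        (h.2 a (b+1) (by omega) (by omega))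
    · rw [mergeRow_self, mergeCol_gt D _ hb, mergeCol_gt D _ hb, mergeCol_gt D _ hb,
        mergeRow_self]
  · rw [mergeRow_gt D _ ha]
    rcases Nat.lt_trichotomy b j with hb | hb | hb
    · rw [mergeCol_lt D _ hb, mergeCol_lt D _ hb, mergeRow_gt D _ ha]
    · subst hb
      rw [mergeCol_self, mergeCol_self, mergeRow_gt D _ ha, mergeRow_gt D _ ha]
    · rw [mergeCol_gt D _ hb, mergeCol_gt D _ hb, mergeRow_gt D _ ha]

-- definitional commutations with row/column shifts
lemma mergeCol_dropRow {j : ℕ} (M : ℕ → ℕ → B) :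
    mergeCol D j (fun a b => M (a+1) b) = fun a b => (mergeCol D j M) (a+1) b := rfl
lemma mergeRow_dropCol {i : ℕ} (M : ℕ → ℕ → B) :
    mergeRow D i (fun a b => M a (b+1)) = fun a b => (mergeRow D i M) a (b+1) := rfl

end Mat
end Stmt5Aux
namespace Stmt5Aux
section Tup
variable {B V H P K : Type*} (D : DGpd B V H P)

lemma mergeH_lt {k j : ℕ} (x : ℕ → H) (hj : j < k) : mergeH D k x j = x j := if_pos hj
lemma mergeH_self {k : ℕ} (x : ℕ → H) : mergeH D k x k = D.mulH (x k) (x (k+1)) := by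
  unfold mergeH; rw [if_neg (lt_irrefl k), if_pos rfl]
lemma mergeH_gt {k j : ℕ} (x : ℕ → H) (hj : k < j) : mergeH D k x j = x (j+1) := by
  unfold mergeH; rw [if_neg (by omega), if_neg (by omega)]
lemma mergeV_lt {k j : ℕ} (g : ℕ → V) (hj : j < k) : mergeV D k g j = g j := if_pos hj
lemma mergeV_self {k : ℕ} (g : ℕ → V) : mergeV D k g k = D.mulV (g k) (g (k+1)) := by
  unfold mergeV; rw [if_neg (lt_irrefl k), if_pos rfl]
lemma mergeV_gt {k j : ℕ} (g : ℕ → V) (hj : k < j) : mergeV D k g j = g (j+1) := by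
  unfold mergeV; rw [if_neg (by omega), if_neg (by omega)]

lemma hcomp_mono {n m : ℕ} {x : ℕ → H} (h : HComp D n x) (hm : m ≤ n) : HComp D m x :=
  fun i hi => h i (by omega)
lemma vcomp_mono {n m : ℕ} {g : ℕ → V} (h : VComp D n g) (hm : m ≤ n) : VComp D m g :=
  fun i hi => h i (by omega)

lemma hcomp_shift {n : ℕ} {x : ℕ → H} (h : HComp D (n+1) x) :
    HComp D n (fun i => x (i+1)) := fun i hi => h (i+1) (by omega)
lemma vcomp_shift {n : ℕ} {g : ℕ → V} (h : VComp D (n+1) g) :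
    VComp D n (fun i => g (i+1)) := fun i hi => h (i+1) (by omega)

lemma hcomp_mergeH {n k : ℕ} {x : ℕ → H} (hk : k + 1 < n + 1) (h : HComp D (n+1) x) :
    HComp D n (mergeH D k x) := by
  intro i hi
  rcases Nat.lt_trichotomy (i+1) k with h1 | h1 | h1
  · rw [mergeH_lt D x (by omega), mergeH_lt D x h1]; exact h i (by omega)
  · rw [mergeH_lt D x (by omega), h1, mergeH_self,
      D.sH_mul _ _ (h k (by omega)), ← h1]
    exact h i (by omega)
  · rcases Nat.lt_or_ge k i with h2 | h2
    · rw [mergeH_gt D x h2, mergeH_gt D x (by omega)]; exact h (i+1) (by omega)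
    · have : i = k := by omega
      subst this
      rw [mergeH_self, mergeH_gt D x (by omega), D.eH_mul _ _ (h i (by omega))]
      exact h (i+1) (by omega)

lemma vcomp_mergeV {n k : ℕ} {g : ℕ → V} (hk : k + 1 < n + 1) (h : VComp D (n+1) g) :
    VComp D n (mergeV D k g) := by
  intro i hi
  rcases Nat.lt_trichotomy (i+1) k with h1 | h1 | h1
  · rw [mergeV_lt D g (by omega), mergeV_lt D g h1]; exact h i (by omega)
  · rw [mergeV_lt D g (by omega), h1, mergeV_self,
      D.sV_mul _ _ (h k (by omega)), ← h1]
    exact h i (by omega)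
  · rcases Nat.lt_or_ge k i with h2 | h2
    · rw [mergeV_gt D g h2, mergeV_gt D g (by omega)]; exact h (i+1) (by omega)
    · have : i = k := by omega
      subst this
      rw [mergeV_self, mergeV_gt D g (by omega), D.eV_mul _ _ (h i (by omega))]
      exact h (i+1) (by omega)

/-- starting arrow of a merged tuple -/
lemma sH_mergeH_zero {k : ℕ} {x : ℕ → H} (h : k = 0 → D.eH (x 0) = D.sH (x 1)) :
    D.sH (mergeH D k x 0) = D.sH (x 0) := by
  cases k with
  | zero => rw [mergeH_self]; exact D.sH_mul _ _ (h rfl)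
  | succ m => rw [mergeH_lt D x (by omega)]

lemma eV_mergeV_last {n k : ℕ} {g : ℕ → V} (hk : k ≤ n) (h : D.eV (g n) = D.sV (g (n+1))) :
    D.eV (mergeV D k g n) = D.eV (g (n+1)) := by
  rcases Nat.lt_or_ge k n with h1 | h1
  · rw [mergeV_gt D g h1]
  · have : k = n := by omega
    subst this
    rw [mergeV_self]; exact D.eV_mul _ _ h

-- rows/columns of matrices
lemma brow_mergeCol {k i : ℕ} {M : ℕ → ℕ → B} (hcmp : D.r (M i k) = D.l (M i (k+1))) :
    (fun j => D.b (mergeCol D k M i j)) = mergeH D k (fun j => D.b (M i j)) := by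
  funext j
  rcases Nat.lt_trichotomy j k with h1 | h1 | h1
  · rw [mergeCol_lt D M h1, mergeH_lt D _ h1]
  · subst h1
    rw [mergeCol_self, mergeH_self, D.hc_b _ _ hcmp]
  · rw [mergeCol_gt D M h1, mergeH_gt D _ h1]

lemma trow_mergeCol {k i : ℕ} {M : ℕ → ℕ → B} (hcmp : D.r (M i k) = D.l (M i (k+1))) :
    (fun j => D.t (mergeCol D k M i j)) = mergeH D k (fun j => D.t (M i j)) := by
  funext j
  rcases Nat.lt_trichotomy j k with h1 | h1 | h1
  · rw [mergeCol_lt D M h1, mergeH_lt D _ h1]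
  · subst h1
    rw [mergeCol_self, mergeH_self, D.hc_t _ _ hcmp]
  · rw [mergeCol_gt D M h1, mergeH_gt D _ h1]

lemma rcol_mergeRow {k j : ℕ} {M : ℕ → ℕ → B} (hcmp : D.b (M k j) = D.t (M (k+1) j)) :
    (fun i => D.r (mergeRow D k M i j)) = mergeV D k (fun i => D.r (M i j)) := by
  funext i
  rcases Nat.lt_trichotomy i k with h1 | h1 | h1
  · rw [mergeRow_lt D M h1, mergeV_lt D _ h1]
  · subst h1
    rw [mergeRow_self, mergeV_self, D.vc_r _ _ hcmp]
  · rw [mergeRow_gt D M h1, mergeV_gt D _ h1]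

lemma lcol_mergeRow {k j : ℕ} {M : ℕ → ℕ → B} (hcmp : D.b (M k j) = D.t (M (k+1) j)) :
    (fun i => D.l (mergeRow D k M i j)) = mergeV D k (fun i => D.l (M i j)) := by
  funext i
  rcases Nat.lt_trichotomy i k with h1 | h1 | h1
  · rw [mergeRow_lt D M h1, mergeV_lt D _ h1]
  · subst h1
    rw [mergeRow_self, mergeV_self, D.vc_l _ _ hcmp]
  · rw [mergeRow_gt D M h1, mergeV_gt D _ h1]

-- composability of rows and columns
lemma hcomp_brow {s : ℕ} {M : ℕ → ℕ → B} (h : BComp D 1 s M) :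
    HComp D s (fun j => D.b (M 0 j)) := by
  intro j hj
  rw [D.corner_br, D.corner_bl, h.1 0 j (by omega) hj]

lemma hcomp_trow {s : ℕ} {M : ℕ → ℕ → B} (h : BComp D 1 s M) :
    HComp D s (fun j => D.t (M 0 j)) := by
  intro j hj
  rw [D.corner_tr, D.corner_tl, h.1 0 j (by omega) hj]

lemma vcomp_rcol {r : ℕ} {M : ℕ → ℕ → B} (h : BComp D r 1 M) :
    VComp D r (fun i => D.r (M i 0)) := by
  intro i hi
  rw [← D.corner_br, ← D.corner_tr, h.2 i 0 hi (by omega)]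

lemma vcomp_lcol {r : ℕ} {M : ℕ → ℕ → B} (h : BComp D r 1 M) :
    VComp D r (fun i => D.l (M i 0)) := by
  intro i hi
  rw [← D.corner_bl, ← D.corner_tl, h.2 i 0 hi (by omega)]

end Tup
end Stmt5Aux
namespace Stmt5Aux
section Extra
variable {B V H P K : Type*}

lemma map_sgnF {Kb : AbBundle P K} {p q : P} (f : Fib Kb p →+ Fib Kb q) (k : ℕ) (a : Fib Kb p) :
    f (sgnF k a) = sgnF k (f a) := by
  unfold sgnF; split <;> simp

variable (D : DGpd B V H P)

lemma l_mergeCol_zero {k i : ℕ} {M : ℕ → ℕ → B} (h : k = 0 → D.r (M i 0) = D.l (M i 1)) :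
    D.l (mergeCol D k M i 0) = D.l (M i 0) := by
  cases k with
  | zero => rw [mergeCol_self, D.hc_l _ _ (h rfl)]
  | succ m => rw [mergeCol_lt D M (by omega)]

lemma b_mergeRow_last {k n : ℕ} {M : ℕ → ℕ → B} (hk : k ≤ n)
    (h : k = n → D.b (M n 0) = D.t (M (n+1) 0)) :
    D.b (mergeRow D k M n 0) = D.b (M (n+1) 0) := by
  rcases Nat.lt_or_ge k n with h1 | h1
  · rw [mergeRow_gt D M h1]
  · have : k = n := by omega
    subst this
    rw [mergeRow_self, D.vc_b _ _ (h rfl)]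

lemma eVl_mergeRow_last {k n : ℕ} {M : ℕ → ℕ → B} (hk : k ≤ n)
    (h : k = n → D.b (M n 0) = D.t (M (n+1) 0)) :
    D.eV (D.l (mergeRow D k M n 0)) = D.eV (D.l (M (n+1) 0)) := by
  rcases Nat.lt_or_ge k n with h1 | h1
  · rw [mergeRow_gt D M h1]
  · have : k = n := by omega
    subst this
    rw [mergeRow_self, D.vc_l _ _ (h rfl)]
    refine D.eV_mul _ _ ?_
    rw [← D.corner_bl, ← D.corner_tl, h rfl]

lemma l_mergeRow_last_self {n : ℕ} {M : ℕ → ℕ → B}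
    (h : D.b (M n 0) = D.t (M (n+1) 0)) :
    D.l (mergeRow D n M n 0) = D.mulV (D.l (M n 0)) (D.l (M (n+1) 0)) := by
  rw [mergeRow_self, D.vc_l _ _ h]

end Extra
end Stmt5Aux
namespace Stmt5Aux
section Cases
variable {B V H P K : Type*} {D : DGpd B V H P} {Kb : AbBundle P K} (Ac : DAction D Kb)

lemma case00 (a : P → K) (ha : ∀ p, Kb.proj (a p) = p)
    (M : ℕ → ℕ → B) (hM : BComp D 1 1 M) :
    dV0s D Kb Ac (dH00 D Kb Ac a) M = dHr0 D Kb Ac 1 (dV00 D Kb Ac a) M := by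
  simp only [dV0s, dH00, dV00, dHr0]
  set A := M 0 0 with hA
  rw [D.corner_br, D.corner_bl, D.corner_tr, D.corner_tl]
  -- Fib elements
  set p := D.eV (D.l A) with hp
  have hb : D.sH (D.b A) = p := D.corner_bl A
  have h1 : D.eV (D.r A) = D.eH (D.b A) := (D.corner_br A).symm
  have htl : D.sH (D.t A) = D.sV (D.l A) := D.corner_tl A
  have h3 : D.sV (D.r A) = D.eH (D.t A) := (D.corner_tr A).symm
  have h4 : D.sV (D.l A) = D.eV (D.invV (D.l A)) := (D.eV_inv _).symm
  have h6 : D.sV (D.r A) = D.eV (D.invV (D.r A)) := (D.eV_inv _).symm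
  have hθ : D.sV (D.invV (D.l A)) = p := D.sV_inv _
  have hvr : D.sV (D.invV (D.r A)) = D.eV (D.r A) := D.sV_inv _
  set u : Fib Kb (D.eV (D.r A)) := ⟨a (D.eV (D.r A)), ha _⟩ with hu
  set w : Fib Kb p := ⟨a p, ha _⟩ with hw
  set v : Fib Kb (D.sV (D.r A)) := ⟨a (D.sV (D.r A)), ha _⟩ with hv
  set z : Fib Kb (D.sV (D.l A)) := ⟨a (D.sV (D.l A)), ha _⟩ with hz
  have key : (hAct Ac (D.b A) hb (castF h1 u) - w) -
      vAct Ac (D.invV (D.l A)) hθ (castF h4 (hAct Ac (D.t A) htl (castF h3 v) - z)) =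
      (hAct Ac (D.b A) hb (castF h1 (u - vAct Ac (D.invV (D.r A)) hvr (castF h6 v)))) -
        (w - vAct Ac (D.invV (D.l A)) hθ (castF h4 z)) := by
    simp only [map_sub]
    have hcompat : vAct Ac (D.invV (D.l A)) hθ (castF h4 (hAct Ac (D.t A) htl (castF h3 v))) =
        hAct Ac (D.b A) hb (castF h1 (vAct Ac (D.invV (D.r A)) hvr (castF h6 v))) := by
      apply Subtype.ext
      exact Ac.compat A (a (D.sV (D.r A))) ((ha _).trans h3)
    rw [hcompat]
    abel
  exact congrArg Subtype.val key
end Cases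
end Stmt5Aux
namespace Stmt5Aux
section Case0s
variable {B V H P K : Type*} {D : DGpd B V H P} {Kb : AbBundle P K} (Ac : DAction D Kb)

lemma case0s (s : ℕ) (a : (ℕ → H) → K)
    (ha : ∀ x, HComp D (s + 1) x → Kb.proj (a x) = D.sH (x 0))
    (M : ℕ → ℕ → B) (hM : BComp D 1 (s + 2) M) :
    dV0s D Kb Ac (dHbar D Kb Ac (s + 1) a) M =
      dHmat D Kb Ac 1 (s + 1) (dV0s D Kb Ac a) M := by
  simp only [dV0s, dHbar, dHmat]
  simp only [Nat.sub_self, Nat.zero_add]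
  rw [show D.eV (D.l (M 0 0)) = D.sH (D.b (M 0 0)) from (D.corner_bl _).symm]
  -- composability of the rows
  have hxb : HComp D (s+2) (fun j => D.b (M 0 j)) := hcomp_brow D hM
  have hxt : HComp D (s+2) (fun j => D.t (M 0 j)) := hcomp_trow D hM
  -- point equalities
  have hq1 : D.sH (D.t (M 0 0)) = D.eV (D.invV (D.l (M 0 0))) :=
    (D.corner_tl _).trans (D.eV_inv _).symm
  have hth : D.sV (D.invV (D.l (M 0 0))) = D.sH (D.b (M 0 0)) :=
    (D.sV_inv _).trans (D.corner_bl _).symm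
  have hg1 : D.sH (D.t (M 0 1)) = D.eV (D.invV (D.l (M 0 1))) :=
    (D.corner_tl _).trans (D.eV_inv _).symm
  have hg2 : D.sV (D.invV (D.l (M 0 1))) = D.eH (D.b (M 0 0)) :=
    (D.sV_inv _).trans (by rw [← hM.1 0 0 (by omega) (by omega), ← D.corner_br])
  -- projection facts
  have pf_sh_b : Kb.proj (a fun i => D.b (M 0 (i+1))) = D.eH (D.b (M 0 0)) :=
    (ha _ (hcomp_mono D (hcomp_shift D hxb) (by omega))).trans (hxb 0 (by omega)).symm
  have pf_sh_t : Kb.proj (a fun i => D.t (M 0 (i+1))) = D.eH (D.t (M 0 0)) :=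
    (ha _ (hcomp_mono D (hcomp_shift D hxt) (by omega))).trans (hxt 0 (by omega)).symm
  have pf_sh_t1 : Kb.proj (a fun i => D.t (M 0 (i+1))) = D.sH (D.t (M 0 1)) :=
    ha _ (hcomp_mono D (hcomp_shift D hxt) (by omega))
  -- Fib atoms
  set Fsh : Fib Kb (D.eH (D.b (M 0 0))) := ⟨a fun i => D.b (M 0 (i+1)), pf_sh_b⟩ with hFsh
  set Tsh0 : Fib Kb (D.eH (D.t (M 0 0))) := ⟨a fun i => D.t (M 0 (i+1)), pf_sh_t⟩ with hTsh0
  set Tsh1 : Fib Kb (D.sH (D.t (M 0 1))) := ⟨a fun i => D.t (M 0 (i+1)), pf_sh_t1⟩ with hTsh1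
  have pf_Ab : ∀ i : Fin (s+1),
      Kb.proj (a (mergeH D i.val fun j => D.b (M 0 j))) = D.sH (D.b (M 0 0)) := fun i =>
    (ha _ (hcomp_mergeH D (Nat.succ_lt_succ i.isLt) hxb)).trans
      (sH_mergeH_zero D (fun _ => hxb 0 (by omega)))
  have pf_At : ∀ i : Fin (s+1),
      Kb.proj (a (mergeH D i.val fun j => D.t (M 0 j))) = D.sH (D.t (M 0 0)) := fun i =>
    (ha _ (hcomp_mergeH D (Nat.succ_lt_succ i.isLt) hxt)).trans
      (sH_mergeH_zero D (fun _ => hxt 0 (by omega)))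
  set Ab : Fin (s+1) → Fib Kb (D.sH (D.b (M 0 0))) :=
    fun i => ⟨a (mergeH D i.val fun j => D.b (M 0 j)), pf_Ab i⟩ with hAb
  set At : Fin (s+1) → Fib Kb (D.sH (D.t (M 0 0))) :=
    fun i => ⟨a (mergeH D i.val fun j => D.t (M 0 j)), pf_At i⟩ with hAt
  set Axb : Fib Kb (D.sH (D.b (M 0 0))) :=
    ⟨a fun j => D.b (M 0 j), ha _ (hcomp_mono D hxb (by omega))⟩ with hAxb
  set Axt : Fib Kb (D.sH (D.t (M 0 0))) :=
    ⟨a fun j => D.t (M 0 j), ha _ (hcomp_mono D hxt (by omega))⟩ with hAxt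
  -- maps
  set θ : Fib Kb (D.sH (D.t (M 0 0))) →+ Fib Kb (D.sH (D.b (M 0 0))) :=
    (vAct Ac (D.invV (D.l (M 0 0))) hth).comp (castF hq1) with hθdef
  set Hb := hAct Ac (D.b (M 0 0)) (rfl : D.sH (D.b (M 0 0)) = D.sH (D.b (M 0 0))) with hHb
  set Ht := hAct Ac (D.t (M 0 0)) (rfl : D.sH (D.t (M 0 0)) = D.sH (D.t (M 0 0))) with hHt
  set X : Fib Kb (D.eH (D.b (M 0 0))) :=
    (vAct Ac (D.invV (D.l (M 0 1))) hg2) ((castF hg1) Tsh1) with hX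
  -- expand the three mySums
  have e1 := mySum_shape (Kb := Kb) (p := D.sH (D.b (M 0 0)))
    (Ac.aH (D.b (M 0 0)) (a fun i => D.b (M 0 (i + 1))))
    (sgn Kb (s + 1 + 1) (a fun j => D.b (M 0 j)))
    (fun i : Fin (s+1) => sgn Kb (i.val + 1) (a (mergeH D i.val fun j => D.b (M 0 j))))
    (Hb Fsh) (fun i => sgnF (i.val + 1) (Ab i)) (sgnF (s + 1 + 1) Axb)
    rfl (fun i => (sgnF_val (i.val+1) (Ab i)).symm) (sgnF_val (s+1+1) Axb).symm
  have e2 := mySum_shape (Kb := Kb) (p := D.sH (D.t (M 0 0)))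
    (Ac.aH (D.t (M 0 0)) (a fun i => D.t (M 0 (i + 1))))
    (sgn Kb (s + 1 + 1) (a fun j => D.t (M 0 j)))
    (fun i : Fin (s+1) => sgn Kb (i.val + 1) (a (mergeH D i.val fun j => D.t (M 0 j))))
    (Ht Tsh0) (fun i => sgnF (i.val + 1) (At i)) (sgnF (s + 1 + 1) Axt)
    rfl (fun i => (sgnF_val (i.val+1) (At i)).symm) (sgnF_val (s+1+1) Axt).symm
  have efr : ∀ j : Fin (s+1),
      sgn Kb (j.val + 1)
        (Kb.sub (a fun j1 => D.b (mergeCol D j.val M 0 j1))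
          (Ac.aV (D.invV (D.l (mergeCol D j.val M 0 0))) (a fun j1 => D.t (mergeCol D j.val M 0 j1))))
      = (sgnF (j.val + 1) (Ab j - θ (At j))).1 := by
    intro j
    rw [brow_mergeCol D (hM.1 0 j.val (by omega) (Nat.succ_lt_succ j.isLt)),
      trow_mergeCol D (hM.1 0 j.val (by omega) (Nat.succ_lt_succ j.isLt)),
      l_mergeCol_zero D (fun _ => hM.1 0 0 (by omega) (by omega)), sgnF_val]
    rfl
  have er := mySum_shape (Kb := Kb) (p := D.sH (D.b (M 0 0)))
    (Ac.aH (D.b (M 0 0))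
      (Kb.sub (a fun j => D.b (M 0 (j + 1)))
        (Ac.aV (D.invV (D.l (M 0 1))) (a fun j => D.t (M 0 (j + 1))))))
    (sgn Kb (s + 1 + 1)
      (Kb.sub (a fun j => D.b (M 0 j)) (Ac.aV (D.invV (D.l (M 0 0))) (a fun j => D.t (M 0 j)))))
    (fun j : Fin (s+1) => sgn Kb (j.val + 1)
      (Kb.sub (a fun j1 => D.b (mergeCol D j.val M 0 j1))
        (Ac.aV (D.invV (D.l (mergeCol D j.val M 0 0))) (a fun j1 => D.t (mergeCol D j.val M 0 j1)))))
    (Hb (Fsh - X)) (fun j => sgnF (j.val + 1) (Ab j - θ (At j))) (sgnF (s + 1 + 1) (Axb - θ Axt))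
    rfl efr (sgnF_val (s+1+1) (Axb - θ Axt)).symm
  rw [e1, e2, er]
  have hcompat : θ (Ht Tsh0) = Hb X := by
    apply Subtype.ext
    show Ac.aV (D.invV (D.l (M 0 0))) (Ac.aH (D.t (M 0 0)) (a fun i => D.t (M 0 (i+1))))
      = Ac.aH (D.b (M 0 0)) (Ac.aV (D.invV (D.l (M 0 1))) (a fun i => D.t (M 0 (i+1))))
    have hc := Ac.compat (M 0 0) (a fun i => D.t (M 0 (i+1))) pf_sh_t
    rw [hM.1 0 0 (by omega) (by omega)] at hc
    exact hc
  have key : (Hb Fsh + (∑ i, sgnF (i.val + 1) (Ab i) + sgnF (s + 1 + 1) Axb))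
      - θ (Ht Tsh0 + (∑ i, sgnF (i.val + 1) (At i) + sgnF (s + 1 + 1) Axt))
      = Hb (Fsh - X) + (∑ j, sgnF (j.val + 1) (Ab j - θ (At j)) + sgnF (s + 1 + 1) (Axb - θ Axt)) := by
    simp only [map_add, map_sub, map_sum, map_sgnF, sgnF_sub, Finset.sum_sub_distrib]
    rw [hcompat]
    abel
  exact congrArg Subtype.val key
end Case0s
end Stmt5Aux
namespace Stmt5Aux
section Caser0
variable {B V H P K : Type*} {D : DGpd B V H P} {Kb : AbBundle P K} (Ac : DAction D Kb)

lemma caser0 (r : ℕ) (b : (ℕ → V) → K)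
    (hb : ∀ g, VComp D (r + 1) g → Kb.proj (b g) = D.eV (g r))
    (M : ℕ → ℕ → B) (hM : BComp D (r + 2) 1 M) :
    dVmat D Kb Ac (r + 1) 1 (dHr0 D Kb Ac (r + 1) b) M =
      dHr0 D Kb Ac (r + 2) (dVbar D Kb Ac (r + 1) b) M := by
  simp only [dVmat, dHr0, dVbar]
  simp only [show r+2-1 = r+1 from rfl, show r+1-1 = r from rfl]
  -- composability of the columns
  have hgr : VComp D (r+2) (fun i => D.r (M i 0)) := vcomp_rcol D hM
  have hgl : VComp D (r+2) (fun i => D.l (M i 0)) := vcomp_lcol D hM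
  -- point equalities
  have hbr : D.eV (D.r (M (r+1) 0)) = D.eH (D.b (M (r+1) 0)) := (D.corner_br _).symm
  have hA' : D.sH (D.b (M (r+1) 0)) = D.eV (D.l (M (r+1) 0)) := D.corner_bl _
  have hsl : D.sV (D.invV (D.l (M (r+1) 0))) = D.eV (D.l (M (r+1) 0)) := D.sV_inv _
  have hsr : D.sV (D.invV (D.r (M (r+1) 0))) = D.eV (D.r (M (r+1) 0)) := D.sV_inv _
  have hcl : D.eV (D.l (M r 0)) = D.eV (D.invV (D.l (M (r+1) 0))) :=
    (hgl r (by omega)).trans (D.eV_inv _).symm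
  have hcr : D.eV (D.r (M r 0)) = D.eV (D.invV (D.r (M (r+1) 0))) :=
    (hgr r (by omega)).trans (D.eV_inv _).symm
  have hy : D.eV (D.r (M r 0)) = D.eH (D.b (M r 0)) := (D.corner_br _).symm
  have hT : D.sH (D.b (M r 0)) = D.eV (D.l (M r 0)) := D.corner_bl _
  -- atoms
  set Br : Fib Kb (D.eV (D.r (M r 0))) :=
    ⟨b fun i => D.r (M i 0), hb _ (vcomp_mono D hgr (by omega))⟩ with hBr
  set Bl : Fib Kb (D.eV (D.l (M r 0))) :=
    ⟨b fun i => D.l (M i 0), hb _ (vcomp_mono D hgl (by omega))⟩ with hBl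
  set H0r : Fib Kb (D.eV (D.r (M (r+1) 0))) :=
    ⟨b fun i => D.r (M (i+1) 0), hb _ (vcomp_mono D (vcomp_shift D hgr) (by omega))⟩ with hH0r
  set H0l : Fib Kb (D.eV (D.l (M (r+1) 0))) :=
    ⟨b fun i => D.l (M (i+1) 0), hb _ (vcomp_mono D (vcomp_shift D hgl) (by omega))⟩ with hH0l
  have pf_Cr : ∀ i : Fin (r+1),
      Kb.proj (b (mergeV D i.val fun i => D.r (M i 0))) = D.eV (D.r (M (r+1) 0)) := fun i =>
    (hb _ (vcomp_mergeV D (Nat.succ_lt_succ i.isLt) hgr)).trans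
      (eV_mergeV_last D (by omega) (hgr r (by omega)))
  have pf_Cl : ∀ i : Fin (r+1),
      Kb.proj (b (mergeV D i.val fun i => D.l (M i 0))) = D.eV (D.l (M (r+1) 0)) := fun i =>
    (hb _ (vcomp_mergeV D (Nat.succ_lt_succ i.isLt) hgl)).trans
      (eV_mergeV_last D (by omega) (hgl r (by omega)))
  set Cr : Fin (r+1) → Fib Kb (D.eV (D.r (M (r+1) 0))) :=
    fun i => ⟨b (mergeV D i.val fun i => D.r (M i 0)), pf_Cr i⟩ with hCr
  set Cl : Fin (r+1) → Fib Kb (D.eV (D.l (M (r+1) 0))) :=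
    fun i => ⟨b (mergeV D i.val fun i => D.l (M i 0)), pf_Cl i⟩ with hCl
  -- maps
  set HA := (hAct Ac (D.b (M (r+1) 0)) hA').comp (castF hbr) with hHA
  set HT := (hAct Ac (D.b (M r 0)) hT).comp (castF hy) with hHT
  set Θ := (vAct Ac (D.invV (D.l (M (r+1) 0))) hsl).comp (castF hcl) with hΘ
  set Θr := (vAct Ac (D.invV (D.r (M (r+1) 0))) hsr).comp (castF hcr) with hΘr
  -- expand the three mySums
  have efL : ∀ i : Fin (r+1),
      sgn Kb (i.val + 1)
        (Kb.sub (Ac.aH (D.b (mergeRow D i.val M r 0)) (b fun i1 => D.r (mergeRow D i.val M i1 0)))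
          (b fun i1 => D.l (mergeRow D i.val M i1 0)))
      = (sgnF (i.val + 1) (HA (Cr i) - Cl i)).1 := by
    intro i
    rw [b_mergeRow_last D (by omega) (fun _ => hM.2 r 0 (by omega) (by omega)),
      rcol_mergeRow D (hM.2 i.val 0 (Nat.succ_lt_succ i.isLt) (by omega)),
      lcol_mergeRow D (hM.2 i.val 0 (Nat.succ_lt_succ i.isLt) (by omega)), sgnF_val]
    rfl
  have eL := mySum_shape (Kb := Kb) (p := D.eV (D.l (M (r+1) 0)))
    (Kb.sub (Ac.aH (D.b (M (r + 1) 0)) (b fun i => D.r (M (i + 1) 0))) (b fun i => D.l (M (i + 1) 0)))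
    (sgn Kb (r + 1 + 1)
      (Ac.aV (D.invV (D.l (M (r + 1) 0)))
        (Kb.sub (Ac.aH (D.b (M r 0)) (b fun i => D.r (M i 0))) (b fun i => D.l (M i 0)))))
    (fun i : Fin (r+1) => sgn Kb (i.val + 1)
      (Kb.sub (Ac.aH (D.b (mergeRow D i.val M r 0)) (b fun i1 => D.r (mergeRow D i.val M i1 0)))
        (b fun i1 => D.l (mergeRow D i.val M i1 0))))
    (HA H0r - H0l) (fun i => sgnF (i.val + 1) (HA (Cr i) - Cl i))
    (sgnF (r + 1 + 1) (Θ (HT Br - Bl)))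
    rfl efL (sgnF_val (r+1+1) (Θ (HT Br - Bl))).symm
  have eR1 := mySum_shape (Kb := Kb) (p := D.eV (D.r (M (r+1) 0)))
    (b fun i => D.r (M (i + 1) 0))
    (sgn Kb (r + 1 + 1) (Ac.aV (D.invV (D.r (M (r + 1) 0))) (b fun i => D.r (M i 0))))
    (fun i : Fin (r+1) => sgn Kb (i.val + 1) (b (mergeV D i.val fun i => D.r (M i 0))))
    H0r (fun i => sgnF (i.val + 1) (Cr i)) (sgnF (r + 1 + 1) (Θr Br))
    rfl (fun i => (sgnF_val (i.val+1) (Cr i)).symm) (sgnF_val (r+1+1) (Θr Br)).symm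
  have eR2 := mySum_shape (Kb := Kb) (p := D.eV (D.l (M (r+1) 0)))
    (b fun i => D.l (M (i + 1) 0))
    (sgn Kb (r + 1 + 1) (Ac.aV (D.invV (D.l (M (r + 1) 0))) (b fun i => D.l (M i 0))))
    (fun i : Fin (r+1) => sgn Kb (i.val + 1) (b (mergeV D i.val fun i => D.l (M i 0))))
    H0l (fun i => sgnF (i.val + 1) (Cl i)) (sgnF (r + 1 + 1) (Θ Bl))
    rfl (fun i => (sgnF_val (i.val+1) (Cl i)).symm) (sgnF_val (r+1+1) (Θ Bl)).symm
  rw [eL, eR1, eR2]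
  have hcompat : Θ (HT Br) = HA (Θr Br) := by
    apply Subtype.ext
    show Ac.aV (D.invV (D.l (M (r+1) 0))) (Ac.aH (D.b (M r 0)) (b fun i => D.r (M i 0)))
      = Ac.aH (D.b (M (r+1) 0)) (Ac.aV (D.invV (D.r (M (r+1) 0))) (b fun i => D.r (M i 0)))
    have hc := Ac.compat (M (r+1) 0) (b fun i => D.r (M i 0))
      (Br.2.trans ((D.corner_br _).symm.trans (by rw [hM.2 r 0 (by omega) (by omega)])))
    rw [← hM.2 r 0 (by omega) (by omega)] at hc
    exact hc
  have key : ((HA H0r - H0l) + (∑ i, sgnF (i.val + 1) (HA (Cr i) - Cl i)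
        + sgnF (r + 1 + 1) (Θ (HT Br - Bl))))
      = (HA (H0r + (∑ i, sgnF (i.val + 1) (Cr i) + sgnF (r + 1 + 1) (Θr Br))))
        - (H0l + (∑ i, sgnF (i.val + 1) (Cl i) + sgnF (r + 1 + 1) (Θ Bl))) := by
    simp only [map_add, map_sub, map_sum, map_sgnF, sgnF_sub, Finset.sum_sub_distrib]
    rw [hcompat]
    abel
  exact (congrArg Subtype.val key).trans rfl
end Caser0
end Stmt5Aux
namespace Stmt5Aux
section CaseInt
variable {B V H P K : Type*} {D : DGpd B V H P} {Kb : AbBundle P K} (Ac : DAction D Kb)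

lemma caseint (r s : ℕ) (a : (ℕ → ℕ → B) → K)
    (ha : ∀ M, BComp D (r + 1) (s + 1) M → Kb.proj (a M) = D.eV (D.l (M r 0)))
    (M : ℕ → ℕ → B) (hM : BComp D (r + 2) (s + 2) M) :
    dVmat D Kb Ac (r + 1) (s + 2) (dHmat D Kb Ac (r + 1) (s + 1) a) M =
      dHmat D Kb Ac (r + 2) (s + 1) (dVmat D Kb Ac (r + 1) (s + 1) a) M := by
  simp only [dVmat, dHmat]
  simp only [show r+2-1 = r+1 from rfl, show r+1-1 = r from rfl, Nat.zero_add]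
  -- composability packages
  have hdropR : BComp D (r+1) (s+2) (fun i j => M (i+1) j) := bcomp_dropRow D hM
  have hdropC : BComp D (r+2) (s+1) (fun i j => M i (j+1)) := bcomp_dropCol D hM
  have hdropRC : BComp D (r+1) (s+1) (fun i j => M (i+1) (j+1)) :=
    bcomp_dropCol D (bcomp_dropRow D hM)
  -- point equalities
  have hA' : D.sH (D.b (M (r+1) 0)) = D.eV (D.l (M (r+1) 0)) := D.corner_bl _
  have hbig1 : D.eV (D.l (M (r+1) 1)) = D.eH (D.b (M (r+1) 0)) := by
    rw [← hM.1 (r+1) 0 (by omega) (by omega), ← D.corner_br]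
  have hbig0 : D.eV (D.l (M r 1)) = D.eH (D.b (M r 0)) := by
    rw [← hM.1 r 0 (by omega) (by omega), ← D.corner_br]
  have hT : D.sH (D.b (M r 0)) = D.eV (D.l (M r 0)) := D.corner_bl _
  have hcl : D.eV (D.l (M r 0)) = D.eV (D.invV (D.l (M (r+1) 0))) := by
    rw [D.eV_inv, ← D.corner_bl, hM.2 r 0 (by omega) (by omega), D.corner_tl]
  have hc1 : D.eV (D.l (M r 1)) = D.eV (D.invV (D.l (M (r+1) 1))) := by
    rw [D.eV_inv, ← D.corner_bl, hM.2 r 1 (by omega) (by omega), D.corner_tl]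
  have hsl : D.sV (D.invV (D.l (M (r+1) 0))) = D.eV (D.l (M (r+1) 0)) := D.sV_inv _
  have hs1 : D.sV (D.invV (D.l (M (r+1) 1))) = D.eV (D.l (M (r+1) 1)) := D.sV_inv _
  have k1 : D.eH (D.b (M (r+1) 0)) = D.eV (D.l (M (r+1) 1)) := hbig1.symm
  have k1' : D.eV (D.l (M (r+1) 1)) = D.eH (D.b (M (r+1) 0)) := hbig1
  -- atoms
  set aRC : Fib Kb (D.eH (D.b (M (r+1) 0))) :=
    ⟨a fun i j => M (i+1) (j+1), (ha _ hdropRC).trans hbig1⟩ with haRC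
  set G : Fin (r+1) → Fib Kb (D.eH (D.b (M (r+1) 0))) := fun i =>
    ⟨a (mergeRow D i.val fun i j => M i (j+1)),
      (ha _ (bcomp_mergeRow D (Nat.succ_lt_succ i.isLt) hdropC)).trans
        ((eVl_mergeRow_last D (Nat.lt_succ_iff.mp i.isLt)
          (fun _ => hdropC.2 r 0 (by omega) (by omega))).trans hbig1)⟩ with hG
  set Q : Fin (s+1) → Fib Kb (D.eV (D.l (M (r+1) 0))) := fun j =>
    ⟨a (mergeCol D j.val fun i j => M (i+1) j),
      (ha _ (bcomp_mergeCol D (Nat.succ_lt_succ j.isLt) hdropR)).trans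
        (congrArg D.eV (l_mergeCol_zero D (fun _ => hdropR.1 r 0 (by omega) (by omega))))⟩ with hQ
  set X : Fin (r+1) → Fin (s+1) → Fib Kb (D.eV (D.l (M (r+1) 0))) := fun i j =>
    ⟨a (mergeCol D j.val (mergeRow D i.val M)),
      (ha _ (bcomp_mergeCol D (Nat.succ_lt_succ j.isLt)
          (bcomp_mergeRow D (Nat.succ_lt_succ i.isLt) hM))).trans
        ((congrArg D.eV (l_mergeCol_zero D
            (fun _ => (bcomp_mergeRow D (Nat.succ_lt_succ i.isLt) hM).1 r 0 (by omega) (by omega)))).trans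
          (eVl_mergeRow_last D (Nat.lt_succ_iff.mp i.isLt)
            (fun _ => hM.2 r 0 (by omega) (by omega))))⟩ with hX
  set Y : Fin (r+1) → Fib Kb (D.eV (D.l (M (r+1) 0))) := fun i =>
    ⟨a (mergeRow D i.val M),
      (ha _ (bcomp_mono D (bcomp_mergeRow D (Nat.succ_lt_succ i.isLt) hM)
          (le_refl _) (by omega))).trans
        (eVl_mergeRow_last D (Nat.lt_succ_iff.mp i.isLt)
          (fun _ => hM.2 r 0 (by omega) (by omega)))⟩ with hY
  set Z : Fin (s+1) → Fib Kb (D.eV (D.l (M r 0))) := fun j =>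
    ⟨a (mergeCol D j.val M),
      (ha _ (bcomp_mono D (bcomp_mergeCol D (Nat.succ_lt_succ j.isLt) hM)
          (by omega) (le_refl _))).trans
        (congrArg D.eV (l_mergeCol_zero D (fun _ => hM.1 r 0 (by omega) (by omega))))⟩ with hZ
  set AM : Fib Kb (D.eV (D.l (M r 0))) :=
    ⟨a M, ha _ (bcomp_mono D hM (by omega) (by omega))⟩ with hAM
  set ARM : Fib Kb (D.eV (D.l (M (r+1) 0))) :=
    ⟨a fun i j => M (i+1) j, ha _ (bcomp_mono D (bcomp_dropRow D hM) (le_refl _) (by omega))⟩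
    with hARM
  set aCM : Fib Kb (D.eH (D.b (M r 0))) :=
    ⟨a fun i j => M i (j+1),
      (ha _ (bcomp_mono D hdropC (by omega) (le_refl _))).trans hbig0⟩ with haCM
  set aCM1 : Fib Kb (D.eV (D.l (M r 1))) :=
    ⟨a fun i j => M i (j+1), ha _ (bcomp_mono D hdropC (by omega) (le_refl _))⟩ with haCM1
  -- maps
  set HA := hAct Ac (D.b (M (r+1) 0)) hA' with hHA
  set HT := hAct Ac (D.b (M r 0)) hT with hHT
  set Θ := (vAct Ac (D.invV (D.l (M (r+1) 0))) hsl).comp (castF hcl) with hΘdef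
  set Θ1 := (vAct Ac (D.invV (D.l (M (r+1) 1))) hs1).comp (castF hc1) with hΘ1def
  -- inner expansions for the non-indexed inner sums
  have eRM := mySum_shape (Kb := Kb) (p := D.eV (D.l (M (r+1) 0)))
    (Ac.aH (D.b (M (r + 1) 0)) (a fun i j => M (i + 1) (j + 1)))
    (sgn Kb (s + 1 + 1) (a fun i j => M (i + 1) j))
    (fun j : Fin (s+1) => sgn Kb (j.val + 1) (a (mergeCol D j.val fun i j => M (i + 1) j)))
    (HA aRC) (fun j => sgnF (j.val + 1) (Q j)) (sgnF (s + 1 + 1) ARM)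
    rfl (fun j => (sgnF_val (j.val+1) (Q j)).symm) (sgnF_val (s+1+1) ARM).symm
  have eM := mySum_shape (Kb := Kb) (p := D.eV (D.l (M r 0)))
    (Ac.aH (D.b (M r 0)) (a fun i j => M i (j + 1)))
    (sgn Kb (s + 1 + 1) (a M))
    (fun j : Fin (s+1) => sgn Kb (j.val + 1) (a (mergeCol D j.val M)))
    (HT aCM) (fun j => sgnF (j.val + 1) (Z j)) (sgnF (s + 1 + 1) AM)
    rfl (fun j => (sgnF_val (j.val+1) (Z j)).symm) (sgnF_val (s+1+1) AM).symm
  have eCM := mySum_shape (Kb := Kb) (p := D.eV (D.l (M (r+1) 1)))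
    (a fun i j => M (i + 1) (j + 1))
    (sgn Kb (r + 1 + 1) (Ac.aV (D.invV (D.l (M (r + 1) 1))) (a fun i j => M i (j + 1))))
    (fun i : Fin (r+1) => sgn Kb (i.val + 1) (a (mergeRow D i.val fun i j => M i (j + 1))))
    (castF k1 aRC) (fun i => sgnF (i.val + 1) (castF k1 (G i))) (sgnF (r + 1 + 1) (Θ1 aCM1))
    rfl (fun i => (sgnF_val (i.val+1) (castF k1 (G i))).symm)
    (sgnF_val (r+1+1) (Θ1 aCM1)).symm
  have eRM' := mySum_shape (Kb := Kb) (p := D.eV (D.l (M (r+1) 0)))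
    (a fun i j => M (i + 1) j)
    (sgn Kb (r + 1 + 1) (Ac.aV (D.invV (D.l (M (r + 1) 0))) (a M)))
    (fun i : Fin (r+1) => sgn Kb (i.val + 1) (a (mergeRow D i.val M)))
    ARM (fun i => sgnF (i.val + 1) (Y i)) (sgnF (r + 1 + 1) (Θ AM))
    rfl (fun i => (sgnF_val (i.val+1) (Y i)).symm) (sgnF_val (r+1+1) (Θ AM)).symm
  rw [eRM, eM, eCM, eRM']
  -- outer indexed entries
  have efL : ∀ i : Fin (r+1),
      sgn Kb (i.val + 1)
        (mySum Kb (D.eV (D.l (mergeRow D i.val M r 0)))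
          (Ac.aH (D.b (mergeRow D i.val M r 0)) (a fun i1 j => mergeRow D i.val M i1 (j + 1)) ::
            ((List.ofFn fun j : Fin (s+1) =>
                sgn Kb (j.val + 1) (a (mergeCol D j.val (mergeRow D i.val M)))) ++
              [sgn Kb (s + 1 + 1) (a (mergeRow D i.val M))])))
      = (sgnF (i.val + 1)
          (HA (G i) + (∑ j, sgnF (j.val + 1) (X i j) + sgnF (s + 1 + 1) (Y i)))).1 := by
    intro i
    rw [eVl_mergeRow_last D (Nat.lt_succ_iff.mp i.isLt) (fun _ => hM.2 r 0 (by omega) (by omega)),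
      b_mergeRow_last D (Nat.lt_succ_iff.mp i.isLt) (fun _ => hM.2 r 0 (by omega) (by omega)),
      mySum_shape (Kb := Kb) (p := D.eV (D.l (M (r+1) 0)))
        (Ac.aH (D.b (M (r + 1) 0)) (a fun i1 j => mergeRow D i.val M i1 (j + 1)))
        (sgn Kb (s + 1 + 1) (a (mergeRow D i.val M)))
        (fun j : Fin (s+1) => sgn Kb (j.val + 1) (a (mergeCol D j.val (mergeRow D i.val M))))
        (HA (G i)) (fun j => sgnF (j.val + 1) (X i j)) (sgnF (s + 1 + 1) (Y i))
        rfl (fun j => (sgnF_val (j.val+1) (X i j)).symm) (sgnF_val (s+1+1) (Y i)).symm,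
      sgnF_val]
  have hXcomm : ∀ (i : Fin (r+1)) (j : Fin (s+1)),
      sgn Kb (i.val + 1) (a (mergeRow D i.val (mergeCol D j.val M)))
        = (sgnF (i.val + 1) (X i j)).1 := by
    intro i j
    rw [mergeRow_mergeCol_comm D (Nat.succ_lt_succ i.isLt) (Nat.succ_lt_succ j.isLt) hM,
      sgnF_val]
  have efR : ∀ j : Fin (s+1),
      sgn Kb (j.val + 1)
        (mySum Kb (D.eV (D.l (mergeCol D j.val M (r + 1) 0)))
          ((a fun i j1 => mergeCol D j.val M (i + 1) j1) ::
            ((List.ofFn fun i : Fin (r+1) =>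
                sgn Kb (i.val + 1) (a (mergeRow D i.val (mergeCol D j.val M)))) ++
              [sgn Kb (r + 1 + 1)
                  (Ac.aV (D.invV (D.l (mergeCol D j.val M (r + 1) 0))) (a (mergeCol D j.val M)))])))
      = (sgnF (j.val + 1)
          (Q j + (∑ i, sgnF (i.val + 1) (X i j) + sgnF (r + 1 + 1) (Θ (Z j))))).1 := by
    intro j
    rw [l_mergeCol_zero D (fun _ => hM.1 (r+1) 0 (by omega) (by omega)),
      mySum_shape (Kb := Kb) (p := D.eV (D.l (M (r+1) 0)))
        (a fun i j1 => mergeCol D j.val M (i + 1) j1)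
        (sgn Kb (r + 1 + 1) (Ac.aV (D.invV (D.l (M (r + 1) 0))) (a (mergeCol D j.val M))))
        (fun i : Fin (r+1) => sgn Kb (i.val + 1) (a (mergeRow D i.val (mergeCol D j.val M))))
        (Q j) (fun i => sgnF (i.val + 1) (X i j)) (sgnF (r + 1 + 1) (Θ (Z j)))
        rfl (fun i => hXcomm i j) (sgnF_val (r+1+1) (Θ (Z j))).symm,
      sgnF_val]
  rw [mySum_shape (Kb := Kb) (p := D.eV (D.l (M (r+1) 0)))
      ((HA aRC + (∑ j, sgnF (j.val + 1) (Q j) + sgnF (s + 1 + 1) ARM)).1)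
      (sgn Kb (r + 1 + 1)
        (Ac.aV (D.invV (D.l (M (r + 1) 0)))
          ((HT aCM + (∑ j, sgnF (j.val + 1) (Z j) + sgnF (s + 1 + 1) AM)).1)))
      (fun i : Fin (r+1) =>
        sgn Kb (i.val + 1)
          (mySum Kb (D.eV (D.l (mergeRow D i.val M r 0)))
            (Ac.aH (D.b (mergeRow D i.val M r 0)) (a fun i1 j => mergeRow D i.val M i1 (j + 1)) ::
              ((List.ofFn fun j : Fin (s+1) =>
                  sgn Kb (j.val + 1) (a (mergeCol D j.val (mergeRow D i.val M)))) ++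
                [sgn Kb (s + 1 + 1) (a (mergeRow D i.val M))]))))
      (HA aRC + (∑ j, sgnF (j.val + 1) (Q j) + sgnF (s + 1 + 1) ARM))
      (fun i => sgnF (i.val + 1)
        (HA (G i) + (∑ j, sgnF (j.val + 1) (X i j) + sgnF (s + 1 + 1) (Y i))))
      (sgnF (r + 1 + 1) (Θ (HT aCM + (∑ j, sgnF (j.val + 1) (Z j) + sgnF (s + 1 + 1) AM))))
      rfl efL
      (sgnF_val (r+1+1) (Θ (HT aCM + (∑ j, sgnF (j.val + 1) (Z j) + sgnF (s + 1 + 1) AM)))).symm,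
    mySum_shape (Kb := Kb) (p := D.eV (D.l (M (r+1) 0)))
      (Ac.aH (D.b (M (r + 1) 0))
        ((castF k1 aRC + (∑ i, sgnF (i.val + 1) (castF k1 (G i)) + sgnF (r + 1 + 1) (Θ1 aCM1))).1))
      (sgn Kb (s + 1 + 1)
        ((ARM + (∑ i, sgnF (i.val + 1) (Y i) + sgnF (r + 1 + 1) (Θ AM))).1))
      (fun j : Fin (s+1) =>
        sgn Kb (j.val + 1)
          (mySum Kb (D.eV (D.l (mergeCol D j.val M (r + 1) 0)))
            ((a fun i j1 => mergeCol D j.val M (i + 1) j1) ::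
              ((List.ofFn fun i : Fin (r+1) =>
                  sgn Kb (i.val + 1) (a (mergeRow D i.val (mergeCol D j.val M)))) ++
                [sgn Kb (r + 1 + 1)
                    (Ac.aV (D.invV (D.l (mergeCol D j.val M (r + 1) 0))) (a (mergeCol D j.val M)))]))))
      (HA (castF k1'
        (castF k1 aRC + (∑ i, sgnF (i.val + 1) (castF k1 (G i)) + sgnF (r + 1 + 1) (Θ1 aCM1)))))
      (fun j => sgnF (j.val + 1)
        (Q j + (∑ i, sgnF (i.val + 1) (X i j) + sgnF (r + 1 + 1) (Θ (Z j)))))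
      (sgnF (s + 1 + 1) (ARM + (∑ i, sgnF (i.val + 1) (Y i) + sgnF (r + 1 + 1) (Θ AM))))
      rfl efR
      (sgnF_val (s+1+1) (ARM + (∑ i, sgnF (i.val + 1) (Y i) + sgnF (r + 1 + 1) (Θ AM)))).symm]
  -- the key identity in the fiber group
  have hcompat : Θ (HT aCM) = HA (castF k1' (Θ1 aCM1)) := by
    apply Subtype.ext
    show Ac.aV (D.invV (D.l (M (r+1) 0))) (Ac.aH (D.b (M r 0)) (a fun i j => M i (j+1)))
      = Ac.aH (D.b (M (r+1) 0)) (Ac.aV (D.invV (D.l (M (r+1) 1))) (a fun i j => M i (j+1)))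
    have prf : Kb.proj (a fun i j => M i (j+1)) = D.eH (D.t (M (r+1) 0)) :=
      (ha _ (bcomp_mono D hdropC (by omega) (le_refl _))).trans
        (by rw [← hM.2 r 0 (by omega) (by omega), D.corner_br, hM.1 r 0 (by omega) (by omega)])
    have hc := Ac.compat (M (r+1) 0) (a fun i j => M i (j+1)) prf
    rw [← hM.2 r 0 (by omega) (by omega), hM.1 (r+1) 0 (by omega) (by omega)] at hc
    exact hc
  have key : (HA aRC + (∑ j, sgnF (j.val + 1) (Q j) + sgnF (s + 1 + 1) ARM))
      + (∑ i, sgnF (i.val + 1)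
          (HA (G i) + (∑ j, sgnF (j.val + 1) (X i j) + sgnF (s + 1 + 1) (Y i)))
        + sgnF (r + 1 + 1) (Θ (HT aCM + (∑ j, sgnF (j.val + 1) (Z j) + sgnF (s + 1 + 1) AM))))
      = HA (castF k1'
            (castF k1 aRC + (∑ i, sgnF (i.val + 1) (castF k1 (G i)) + sgnF (r + 1 + 1) (Θ1 aCM1))))
        + (∑ j, sgnF (j.val + 1)
            (Q j + (∑ i, sgnF (i.val + 1) (X i j) + sgnF (r + 1 + 1) (Θ (Z j))))
          + sgnF (s + 1 + 1) (ARM + (∑ i, sgnF (i.val + 1) (Y i) + sgnF (r + 1 + 1) (Θ AM)))) := by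
    simp only [map_add, map_sum, map_sgnF, sgnF_add, sgnF_sum, castF_castF,
      Finset.sum_add_distrib]
    rw [hcompat]
    have s1 : ∑ i : Fin (r+1), ∑ j : Fin (s+1), sgnF (i.val+1) (sgnF (j.val+1) (X i j))
        = ∑ j : Fin (s+1), ∑ i : Fin (r+1), sgnF (j.val+1) (sgnF (i.val+1) (X i j)) := by
      rw [Finset.sum_comm]
      exact Finset.sum_congr rfl (fun j _ => Finset.sum_congr rfl (fun i _ => sgnF_swap _ _ _))
    have s2 : ∑ i : Fin (r+1), sgnF (i.val+1) (sgnF (s+1+1) (Y i))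
        = ∑ i : Fin (r+1), sgnF (s+1+1) (sgnF (i.val+1) (Y i)) :=
      Finset.sum_congr rfl (fun i _ => sgnF_swap _ _ _)
    have s3 : ∑ j : Fin (s+1), sgnF (r+1+1) (sgnF (j.val+1) (Θ (Z j)))
        = ∑ j : Fin (s+1), sgnF (j.val+1) (sgnF (r+1+1) (Θ (Z j))) :=
      Finset.sum_congr rfl (fun j _ => sgnF_swap _ _ _)
    have t1 : sgnF (r+1+1) (sgnF (s+1+1) (Θ AM)) = sgnF (s+1+1) (sgnF (r+1+1) (Θ AM)) :=
      sgnF_swap _ _ _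
    rw [s1, s2, s3, t1]
    abel
  exact congrArg Subtype.val key
end CaseInt
end Stmt5Aux

section Stmt5

variable {B V H P K : Type*}

/-- The vertical and horizontal coboundary maps of the double complex
of a double groupoid commute: for all `r, s ≥ 0`, `d_V ∘ d_H = d_H ∘ d_V` as maps
`D^{r,s} → D^{r+1,s+1}`, where `D^{r,s}` consists of the normalized `K`-valued
functions on the set `F^{(r,s)}` of composable `r × s` matrices of boxes.
The four conjuncts correspond to the cases `(0,0)`, `(0,s)` with `s ≥ 1`,
`(r,0)` with `r ≥ 1`, and `(r,s)` with `r, s ≥ 1`. -/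
theorem dV_dH_commute (D : DGpd B V H P) (Kb : AbBundle P K) (Ac : DAction D Kb) :
    -- case r = 0, s = 0
    (∀ a : P → K, (∀ p, Kb.proj (a p) = p) →
      ∀ M : ℕ → ℕ → B, BComp D 1 1 M →
        dV0s D Kb Ac (dH00 D Kb Ac a) M = dHr0 D Kb Ac 1 (dV00 D Kb Ac a) M) ∧
    -- case r = 0, s ≥ 1
    (∀ (s : ℕ) (a : (ℕ → H) → K),
      (∀ x, HComp D (s + 1) x → Kb.proj (a x) = D.sH (x 0)) →
      (∀ x, HComp D (s + 1) x → 1 ≤ s → (∃ i, i < s + 1 ∧ ∃ p, x i = D.idH p) →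
        a x = Kb.zero (D.sH (x 0))) →
      ∀ M : ℕ → ℕ → B, BComp D 1 (s + 2) M →
        dV0s D Kb Ac (dHbar D Kb Ac (s + 1) a) M =
          dHmat D Kb Ac 1 (s + 1) (dV0s D Kb Ac a) M) ∧
    -- case r ≥ 1, s = 0
    (∀ (r : ℕ) (b : (ℕ → V) → K),
      (∀ g, VComp D (r + 1) g → Kb.proj (b g) = D.eV (g r)) →
      (∀ g, VComp D (r + 1) g → 1 ≤ r → (∃ i, i < r + 1 ∧ ∃ p, g i = D.idV p) →
        b g = Kb.zero (D.eV (g r))) →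
      ∀ M : ℕ → ℕ → B, BComp D (r + 2) 1 M →
        dVmat D Kb Ac (r + 1) 1 (dHr0 D Kb Ac (r + 1) b) M =
          dHr0 D Kb Ac (r + 2) (dVbar D Kb Ac (r + 1) b) M) ∧
    -- interior case r ≥ 1, s ≥ 1
    (∀ (r s : ℕ) (a : (ℕ → ℕ → B) → K),
      (∀ M, BComp D (r + 1) (s + 1) M → Kb.proj (a M) = D.eV (D.l (M r 0))) →
      (∀ M, BComp D (r + 1) (s + 1) M → 1 ≤ r →
        (∃ i j, i < r + 1 ∧ j < s + 1 ∧ ∃ g, M i j = D.idh g) →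
        a M = Kb.zero (D.eV (D.l (M r 0)))) →
      (∀ M, BComp D (r + 1) (s + 1) M → 1 ≤ s →
        (∃ i j, i < r + 1 ∧ j < s + 1 ∧ ∃ x, M i j = D.idv x) →
        a M = Kb.zero (D.eV (D.l (M r 0)))) →
      ∀ M : ℕ → ℕ → B, BComp D (r + 2) (s + 2) M →
        dVmat D Kb Ac (r + 1) (s + 2) (dHmat D Kb Ac (r + 1) (s + 1) a) M =
          dHmat D Kb Ac (r + 2) (s + 1) (dVmat D Kb Ac (r + 1) (s + 1) a) M) := by
  exact ⟨fun a ha M hM => Stmt5Aux.case00 Ac a ha M hM,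
    fun s a ha _ M hM => Stmt5Aux.case0s Ac s a ha M hM,
    fun r b hb _ M hM => Stmt5Aux.caser0 Ac r b hb M hM,
    fun r s a ha _ _ M hM => Stmt5Aux.caseint Ac r s a ha M hM⟩

end Stmt5
end

section
/- If two smash-product double groupoid extensions K♯_{σ,τ}F and K♯_{σ',τ'}F determined by normalized total 1-cocycles (σ,τ) and (σ',τ') are equivalent as extensions of F by K, then (σ,τ) and (σ',τ') are cohomologous: there exists λ: F → K with p∘λ = γ such that σ = σ' + d_V λ and τ = τ' + d_H λ. -/
section CocycleDefs

variable {B V H P K : Type*} (D : DGpd B V H P) (Kb : AbBundle P K) (Ac : DAction D Kb)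

/-- The vertical coboundary `d_V^{1,1} λ` of a `1×1`-cochain, on a vertically
composable pair: `λ(G) - λ({F over G}) + l(G)⁻¹·λ(F)`. -/
def dV11 (lam : B → K) (F G : B) : K :=
  Kb.add (Kb.sub (lam G) (lam (D.vc F G))) (Ac.aV (D.invV (D.l G)) (lam F))

/-- The horizontal coboundary `d_H^{1,1} λ` of a `1×1`-cochain, on a horizontally
composable pair: `b(F)·λ(G) - λ({F G}) + λ(F)`. -/
def dH11 (lam : B → K) (F G : B) : K :=
  Kb.add (Kb.sub (Ac.aH (D.b F) (lam G)) (lam (D.hc F G))) (lam F)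

/-- `(σ, τ)` is a total 1-cocycle: it takes values in the prescribed fibers, `σ` is a
vertical 2-cocycle, `τ` is a horizontal 2-cocycle, and the mixed (interchange)
compatibility holds. -/
def IsTotal1Cocycle (sg ta : B → B → K) : Prop :=
  (∀ F G, D.b F = D.t G → Kb.proj (sg F G) = D.eV (D.l G)) ∧
  (∀ F G, D.r F = D.l G → Kb.proj (ta F G) = D.eV (D.l F)) ∧
  (∀ F G Hb, D.r F = D.l G → D.r G = D.l Hb →
      Kb.add (ta F G) (ta (D.hc F G) Hb) =
        Kb.add (ta F (D.hc G Hb)) (Ac.aH (D.b F) (ta G Hb))) ∧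
  (∀ F G Hb, D.b F = D.t G → D.b G = D.t Hb →
      Kb.add (sg G Hb) (sg F (D.vc G Hb)) =
        Kb.add (Ac.aV (D.invV (D.l Hb)) (sg F G)) (sg (D.vc F G) Hb)) ∧
  (∀ F G Hb J, D.r F = D.l G → D.b F = D.t Hb → D.b G = D.t J → D.r Hb = D.l J →
      Kb.add (Kb.add (Ac.aV (D.invV (D.l Hb)) (ta F G)) (ta Hb J))
          (sg (D.hc F G) (D.hc Hb J)) =
        Kb.add (Kb.add (Ac.aH (D.b Hb) (sg G J)) (sg F Hb))
          (ta (D.vc F Hb) (D.vc G J)))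

/-- `(σ, τ)` is normalized: each cocycle vanishes as soon as one of its arguments is a
degenerate (identity) box. -/
def IsNormalizedPair (sg ta : B → B → K) : Prop :=
  (∀ F G, D.b F = D.t G → ((∃ g, F = D.idh g) ∨ (∃ g, G = D.idh g)) →
    sg F G = Kb.zero (D.eV (D.l G))) ∧
  (∀ F G, D.r F = D.l G → ((∃ x, F = D.idv x) ∨ (∃ x, G = D.idv x)) →
    ta F G = Kb.zero (D.eV (D.l F)))

end CocycleDefs

section SmashDef

variable {B V H P K : Type*}

/-- The underlying set of the smash product `K ♯ F`: the fiber product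
`K ×_{p,γ} F` along the left-bottom vertex map `γ`. -/
def SmashCarrier (D : DGpd B V H P) (Kb : AbBundle P K) : Type _ :=
  {x : K × B // Kb.proj x.1 = D.eV (D.l x.2)}

/-- `DB` is the smash-product double groupoid structure `K ♯_{σ,τ} F` on
`K ×_{p,γ} F` determined by the total 1-cocycle `(σ, τ)`. -/
def IsSmashStructure (D : DGpd B V H P) (Kb : AbBundle P K) (Ac : DAction D Kb)
    (sg ta : B → B → K) (DB : DGpd (SmashCarrier D Kb) V H P) : Prop :=
  DB.sV = D.sV ∧ DB.eV = D.eV ∧ DB.idV = D.idV ∧ DB.mulV = D.mulV ∧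
  DB.invV = D.invV ∧
  DB.sH = D.sH ∧ DB.eH = D.eH ∧ DB.idH = D.idH ∧ DB.mulH = D.mulH ∧
  DB.invH = D.invH ∧
  (∀ x, DB.t x = D.t x.val.2) ∧ (∀ x, DB.b x = D.b x.val.2) ∧
  (∀ x, DB.l x = D.l x.val.2) ∧ (∀ x, DB.r x = D.r x.val.2) ∧
  (∀ g : V, (DB.idh g).val = (Kb.zero (D.eV g), D.idh g)) ∧
  (∀ x : H, (DB.idv x).val = (Kb.zero (D.sH x), D.idv x)) ∧
  (∀ x y, D.r x.val.2 = D.l y.val.2 →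
    (DB.hc x y).val =
      (Kb.add (Kb.add x.val.1 (Ac.aH (D.b x.val.2) y.val.1)) (ta x.val.2 y.val.2),
        D.hc x.val.2 y.val.2)) ∧
  (∀ x y, D.b x.val.2 = D.t y.val.2 →
    (DB.vc x y).val =
      (Kb.add (Kb.add (Ac.aV (D.invV (D.l y.val.2)) x.val.1) y.val.1)
          (sg x.val.2 y.val.2),
        D.vc x.val.2 y.val.2))

end SmashDef


section MyAuxSection

namespace MyAux

variable {P K : Type*} (Kb : AbBundle P K)

lemma zeroAdd {a : K} {p : P} (h : Kb.proj a = p) : Kb.add (Kb.zero p) a = a := by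
  subst h; exact Kb.zero_add a

lemma addZero {a : K} {p : P} (h : Kb.proj a = p) : Kb.add a (Kb.zero p) = a := by
  subst h
  rw [Kb.add_comm _ _ (Kb.proj_zero _).symm]
  exact Kb.zero_add a

def Fib (p : P) := {k : K // Kb.proj k = p}

instance (p : P) : Add (Fib Kb p) :=
  ⟨fun a b => ⟨Kb.add a.1 b.1, by rw [Kb.proj_add _ _ (a.2.trans b.2.symm)]; exact a.2⟩⟩

instance (p : P) : Zero (Fib Kb p) := ⟨⟨Kb.zero p, Kb.proj_zero p⟩⟩

instance (p : P) : Neg (Fib Kb p) := ⟨fun a => ⟨Kb.neg a.1, (Kb.proj_neg a.1).trans a.2⟩⟩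

instance (p : P) : AddCommGroup (Fib Kb p) where
  add_assoc a b c := Subtype.ext
    (Kb.add_assoc a.1 b.1 c.1 (a.2.trans b.2.symm) (b.2.trans c.2.symm))
  zero_add a := Subtype.ext (zeroAdd Kb a.2)
  add_zero a := Subtype.ext (addZero Kb a.2)
  add_comm a b := Subtype.ext (Kb.add_comm a.1 b.1 (a.2.trans b.2.symm))
  neg_add_cancel a := Subtype.ext (by
    show Kb.add (Kb.neg a.1) a.1 = Kb.zero p
    rw [Kb.add_comm _ _ ((Kb.proj_neg a.1).trans (a.2.trans a.2.symm))]
    rw [Kb.add_neg, a.2])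
  nsmul := nsmulRec
  zsmul := zsmulRec

lemma rearrange {p : P} {a b c d e : K}
    (ha : Kb.proj a = p) (hb : Kb.proj b = p) (hc : Kb.proj c = p)
    (hd : Kb.proj d = p) (he : Kb.proj e = p)
    (h : Kb.add a b = Kb.add (Kb.add c d) e) :
    a = Kb.add e (Kb.add (Kb.add d (Kb.neg b)) c) := by
  let A : Fib Kb p := ⟨a, ha⟩
  let B : Fib Kb p := ⟨b, hb⟩
  let C : Fib Kb p := ⟨c, hc⟩
  let D : Fib Kb p := ⟨d, hd⟩
  let E : Fib Kb p := ⟨e, he⟩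
  have h' : A + B = C + D + E := Subtype.ext h
  have h2 : A = E + (D + -B + C) := by
    rw [eq_sub_of_add_eq h']; abel
  exact congrArg Subtype.val h2

end MyAux

section SmashAuxLemmas

variable {B V H P K : Type*} {D : DGpd B V H P} {Kb : AbBundle P K} {Ac : DAction D Kb}
  {sg ta : B → B → K} {DB : DGpd (SmashCarrier D Kb) V H P}

/-- In a smash structure, `τ(id_h(l G), G) = 0`. -/
lemma MyAux.ta_idh (h : IsSmashStructure D Kb Ac sg ta DB)
    (hpta : ∀ F G, D.r F = D.l G → Kb.proj (ta F G) = D.eV (D.l F)) (G : B) :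
    ta (D.idh (D.l G)) G = Kb.zero (D.eV (D.l G)) := by
  obtain ⟨-, -, -, -, -, -, -, -, -, -, -, -, hl, -, hidh, -, hhc, -⟩ := h
  have hy0 : Kb.proj (Kb.zero (D.eV (D.l G))) = D.eV (D.l G) := Kb.proj_zero _
  set y : SmashCarrier D Kb := ⟨(Kb.zero (D.eV (D.l G)), G), hy0⟩ with hydef
  have hy1 : y.val.1 = Kb.zero (D.eV (D.l G)) := rfl
  have hy2 : y.val.2 = G := rfl
  have key := DB.idh_hc y
  rw [hl y, hy2] at key
  set x := DB.idh (D.l G) with hxdef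
  have hxval : x.val = (Kb.zero (D.eV (D.l G)), D.idh (D.l G)) := hidh (D.l G)
  have hx1 : x.val.1 = Kb.zero (D.eV (D.l G)) := by rw [hxval]
  have hx2 : x.val.2 = D.idh (D.l G) := by rw [hxval]
  have hcond : D.r x.val.2 = D.l y.val.2 := by rw [hx2, hy2, D.idh_r]
  have e := congrArg Subtype.val key
  rw [hhc x y hcond] at e
  have e1 := congrArg Prod.fst e
  simp only [hx1, hx2, hy1, hy2] at e1
  rw [D.idh_b] at e1
  have hz : Ac.aH (D.idH (D.eV (D.l G))) (Kb.zero (D.eV (D.l G))) = Kb.zero (D.eV (D.l G)) := by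
    have := Ac.aH_id (Kb.zero (D.eV (D.l G)))
    rwa [Kb.proj_zero] at this
  rw [hz, MyAux.zeroAdd Kb (Kb.proj_zero _)] at e1
  have hpr : Kb.proj (ta (D.idh (D.l G)) G) = D.eV (D.l G) := by
    rw [hpta _ _ (D.idh_r (D.l G)), D.idh_l]
  rw [MyAux.zeroAdd Kb hpr] at e1
  exact e1

/-- In a smash structure, `σ(Θ_{sV g}, id_h g) = 0`. -/
lemma MyAux.sg_theta (h : IsSmashStructure D Kb Ac sg ta DB)
    (hpsg : ∀ F G, D.b F = D.t G → Kb.proj (sg F G) = D.eV (D.l G)) (g : V) :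
    sg (D.idv (D.idH (D.sV g))) (D.idh g) = Kb.zero (D.eV g) := by
  obtain ⟨-, -, -, -, -, -, -, -, -, -, ht, -, -, -, hidh, hidv, -, hvc⟩ := h
  set A := DB.idh g with hAdef
  have hAval : A.val = (Kb.zero (D.eV g), D.idh g) := hidh g
  have hA1 : A.val.1 = Kb.zero (D.eV g) := by rw [hAval]
  have hA2 : A.val.2 = D.idh g := by rw [hAval]
  have key := DB.idv_vc A
  have htA : DB.t A = D.idH (D.sV g) := by rw [ht, hA2, D.idh_t]
  rw [htA] at key
  set x := DB.idv (D.idH (D.sV g)) with hxdef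
  have hxval : x.val = (Kb.zero (D.sH (D.idH (D.sV g))), D.idv (D.idH (D.sV g))) := hidv _
  have hx1 : x.val.1 = Kb.zero (D.sV g) := by rw [hxval, D.sH_id]
  have hx2 : x.val.2 = D.idv (D.idH (D.sV g)) := by rw [hxval]
  have hcond : D.b x.val.2 = D.t A.val.2 := by rw [hx2, hA2, D.idv_b, D.idh_t]
  have e := congrArg Subtype.val key
  rw [hvc x A hcond] at e
  have e1 := congrArg Prod.fst e
  simp only [hx1, hx2, hA1, hA2] at e1
  rw [D.idh_l] at e1
  have h1 : Ac.aV (D.invV g) (Kb.zero (D.sV g)) = Kb.zero (D.eV g) := by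
    have := Ac.aV_zero (D.invV g)
    rwa [D.eV_inv, D.sV_inv] at this
  rw [h1, MyAux.zeroAdd Kb (Kb.proj_zero _)] at e1
  have hpr : Kb.proj (sg (D.idv (D.idH (D.sV g))) (D.idh g)) = D.eV g := by
    rw [hpsg _ _ (by rw [D.idv_b, D.idh_t]), D.idh_l]
  rw [MyAux.zeroAdd Kb hpr] at e1
  exact e1

/-- Horizontal composition with an element over `id_h (l F)` on the left. -/
lemma MyAux.hc_idh_left (h : IsSmashStructure D Kb Ac sg ta DB)
    (hpta : ∀ F G, D.r F = D.l G → Kb.proj (ta F G) = D.eV (D.l F))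
    (F : B) (k : K) (hk : Kb.proj k = D.eV (D.l F))
    (x y : SmashCarrier D Kb) (hx : x.val = (k, D.idh (D.l F))) (hy : y.val.2 = F) :
    (DB.hc x y).val = (Kb.add k y.val.1, F) := by
  have hta := MyAux.ta_idh h hpta F
  obtain ⟨-, -, -, -, -, -, -, -, -, -, -, -, -, -, -, -, hhc, -⟩ := h
  have hx1 : x.val.1 = k := by rw [hx]
  have hx2 : x.val.2 = D.idh (D.l F) := by rw [hx]
  have hy1 : Kb.proj y.val.1 = D.eV (D.l F) := by rw [y.2, hy]
  have hcond : D.r x.val.2 = D.l y.val.2 := by rw [hx2, hy, D.idh_r]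
  rw [hhc x y hcond]
  simp only [hx1, hx2, hy]
  rw [D.idh_b]
  have h1 : Ac.aH (D.idH (D.eV (D.l F))) y.val.1 = y.val.1 := by
    have := Ac.aH_id y.val.1; rwa [hy1] at this
  have h2 : Kb.proj (Kb.add k y.val.1) = D.eV (D.l F) := by
    rw [Kb.proj_add _ _ (hk.trans hy1.symm)]; exact hk
  rw [h1, hta, MyAux.addZero Kb h2, D.idh_hc]

/-- Vertical composition of an element over `Θ` with an identity element. -/
lemma MyAux.vc_theta_idh (h : IsSmashStructure D Kb Ac sg ta DB)
    (hpsg : ∀ F G, D.b F = D.t G → Kb.proj (sg F G) = D.eV (D.l G))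
    (g : V) (k : K) (hk : Kb.proj k = D.eV g)
    (u v : SmashCarrier D Kb)
    (hu : u.val = (Ac.aV g k, D.idv (D.idH (D.sV g)))) (hv : v = DB.idh g) :
    (DB.vc u v).val = (k, D.idh g) := by
  have hsgz := MyAux.sg_theta h hpsg g
  obtain ⟨-, -, -, -, -, -, -, -, -, -, -, -, -, -, hidh, -, -, hvc⟩ := h
  have hu1 : u.val.1 = Ac.aV g k := by rw [hu]
  have hu2 : u.val.2 = D.idv (D.idH (D.sV g)) := by rw [hu]
  have hvval : v.val = (Kb.zero (D.eV g), D.idh g) := by rw [hv]; exact hidh g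
  have hv1 : v.val.1 = Kb.zero (D.eV g) := by rw [hvval]
  have hv2 : v.val.2 = D.idh g := by rw [hvval]
  have hcond : D.b u.val.2 = D.t v.val.2 := by rw [hu2, hv2, D.idv_b, D.idh_t]
  rw [hvc u v hcond]
  simp only [hu1, hu2, hv1, hv2]
  rw [D.idh_l]
  have h1 : Ac.aV (D.invV g) (Ac.aV g k) = k := by
    rw [← Ac.aV_mul _ _ _ (D.eV_inv g) hk, D.invV_mul]
    have := Ac.aV_id k; rwa [hk] at this
  have h2 : D.vc (D.idv (D.idH (D.sV g))) (D.idh g) = D.idh g := by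
    have := D.idv_vc (D.idh g); rwa [D.idh_t] at this
  rw [h1, MyAux.addZero Kb hk, hsgz, MyAux.addZero Kb hk, h2]

end SmashAuxLemmas

end MyAuxSection

section Stmt9

variable {B V H P K : Type*}

/-- If two smash-product extensions `K ♯_{σ,τ} F` and `K ♯_{σ',τ'} F`
determined by normalized total 1-cocycles are equivalent as extensions of `F` by `K`,
then the cocycles are cohomologous: there is `λ : F → K` with `p ∘ λ = γ`,
`σ = σ' + d_V λ` and `τ = τ' + d_H λ`. -/
theorem equivalent_smash_extensions_cohomologous
    (D : DGpd B V H P) (Kb : AbBundle P K) (Ac : DAction D Kb)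
    (sg ta sg' ta' : B → B → K)
    (hco : IsTotal1Cocycle D Kb Ac sg ta) (hno : IsNormalizedPair D Kb sg ta)
    (hco' : IsTotal1Cocycle D Kb Ac sg' ta') (hno' : IsNormalizedPair D Kb sg' ta')
    (DB1 DB2 : DGpd (SmashCarrier D Kb) V H P)
    (h1 : IsSmashStructure D Kb Ac sg ta DB1)
    (h2 : IsSmashStructure D Kb Ac sg' ta' DB2)
    -- `Φ` is an equivalence of extensions from `K ♯_{σ,τ} F` to `K ♯_{σ',τ'} F`
    (Phi : SmashCarrier D Kb → SmashCarrier D Kb)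
    (hbij : Function.Bijective Phi)
    (hhc : ∀ x y, D.r x.val.2 = D.l y.val.2 → Phi (DB1.hc x y) = DB2.hc (Phi x) (Phi y))
    (hvc : ∀ x y, D.b x.val.2 = D.t y.val.2 → Phi (DB1.vc x y) = DB2.vc (Phi x) (Phi y))
    (hidh : ∀ g : V, Phi (DB1.idh g) = DB2.idh g)
    (hidv : ∀ x : H, Phi (DB1.idv x) = DB2.idv x)
    (hproj : ∀ x, (Phi x).val.2 = x.val.2)
    (hincl : ∀ x : SmashCarrier D Kb, (∃ p, x.val.2 = D.Theta p) → Phi x = x) :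
    ∃ lam : B → K, (∀ F : B, Kb.proj (lam F) = D.eV (D.l F)) ∧
      (∀ F G, D.b F = D.t G → sg F G = Kb.add (sg' F G) (dV11 D Kb Ac lam F G)) ∧
      (∀ F G, D.r F = D.l G → ta F G = Kb.add (ta' F G) (dH11 D Kb Ac lam F G)) := by
  have hpsg := hco.1
  have hpta := hco.2.1
  have hpsg' := hco'.1
  have hpta' := hco'.2.1
  -- the 1-cochain λ
  set lam : B → K :=
    fun F0 => (Phi ⟨(Kb.zero (D.eV (D.l F0)), F0), by rw [Kb.proj_zero]⟩).val.1 with hlamdef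
  have hlamp : ∀ F0 : B, Kb.proj (lam F0) = D.eV (D.l F0) := by
    intro F0
    have h0 := (Phi ⟨(Kb.zero (D.eV (D.l F0)), F0), by rw [Kb.proj_zero]⟩).2
    exact h0.trans (congrArg (fun F => D.eV (D.l F)) (hproj _))
  have hPhi0 : ∀ (F0 : B) (prf : Kb.proj (Kb.zero (D.eV (D.l F0))) = D.eV (D.l F0)),
      (Phi ⟨(Kb.zero (D.eV (D.l F0)), F0), prf⟩).val = (lam F0, F0) := by
    intro F0 prf
    exact Prod.ext rfl (hproj _)
  -- Φ fixes every element sitting over a horizontal identity box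
  have fix_idh : ∀ (z : SmashCarrier D Kb) (g : V), z.val.2 = D.idh g → Phi z = z := by
    intro z g hz
    have hk : Kb.proj z.val.1 = D.eV g := by
      have := z.2; rwa [hz, D.idh_l] at this
    have hu0 : Kb.proj (Ac.aV g z.val.1) = D.eV (D.l (D.idv (D.idH (D.sV g)))) := by
      rw [D.idv_l, D.eV_id, D.sH_id]
      exact Ac.aV_proj g z.val.1 hk
    set u : SmashCarrier D Kb := ⟨(Ac.aV g z.val.1, D.idv (D.idH (D.sV g))), hu0⟩ with hudef
    have hcond : D.b u.val.2 = D.t (DB1.idh g).val.2 := by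
      have h15 : (DB1.idh g).val = (Kb.zero (D.eV g), D.idh g) := h1.2.2.2.2.2.2.2.2.2.2.2.2.2.2.1 g
      have hsnd : (DB1.idh g).val.2 = D.idh g := by rw [h15]
      rw [show u.val.2 = D.idv (D.idH (D.sV g)) from rfl, hsnd, D.idv_b, D.idh_t]
    have e1 : z = DB1.vc u (DB1.idh g) := by
      apply Subtype.ext
      rw [MyAux.vc_theta_idh h1 hpsg g z.val.1 hk u (DB1.idh g) rfl rfl, ← hz]
    have e2 : Phi z = DB2.vc u (DB2.idh g) := by
      rw [e1, hvc u (DB1.idh g) hcond]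
      rw [hincl u ⟨D.sV g, by
        show D.idv (D.idH (D.sV g)) = D.Theta (D.sV g)
        exact (D.id_id (D.sV g)).symm⟩, hidh g]
    rw [e2]
    apply Subtype.ext
    rw [MyAux.vc_theta_idh h2 hpsg' g z.val.1 hk u (DB2.idh g) rfl rfl, ← hz]
  -- Φ is translation by λ
  have addPhi : ∀ z : SmashCarrier D Kb,
      (Phi z).val = (Kb.add z.val.1 (lam z.val.2), z.val.2) := by
    intro z
    have hk : Kb.proj z.val.1 = D.eV (D.l z.val.2) := z.2
    have hx0 : Kb.proj z.val.1 = D.eV (D.l (D.idh (D.l z.val.2))) := by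
      rw [D.idh_l]; exact hk
    set x : SmashCarrier D Kb := ⟨(z.val.1, D.idh (D.l z.val.2)), hx0⟩ with hxdef
    set y : SmashCarrier D Kb :=
      ⟨(Kb.zero (D.eV (D.l z.val.2)), z.val.2), by rw [Kb.proj_zero]⟩ with hydef
    have e1 : z = DB1.hc x y := by
      apply Subtype.ext
      rw [MyAux.hc_idh_left h1 hpta z.val.2 z.val.1 hk x y rfl rfl,
        show y.val.1 = Kb.zero (D.eV (D.l z.val.2)) from rfl, MyAux.addZero Kb hk]
    have hcond : D.r x.val.2 = D.l y.val.2 := by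
      show D.r (D.idh (D.l z.val.2)) = D.l z.val.2
      rw [D.idh_r]
    have e2 : Phi z = DB2.hc x (Phi y) := by
      rw [e1, hhc x y hcond, fix_idh x (D.l z.val.2) rfl]
    rw [e2, MyAux.hc_idh_left h2 hpta' z.val.2 z.val.1 hk x (Phi y) rfl (hproj y),
      show (Phi y).val.1 = lam z.val.2 from rfl]
  refine ⟨lam, hlamp, ?_, ?_⟩
  · -- the vertical comparison
    intro F G hFG
    have hEV : D.eV (D.l F) = D.sV (D.l G) := by
      rw [← D.corner_bl, ← D.corner_tl, hFG]
    set x : SmashCarrier D Kb := ⟨(Kb.zero (D.eV (D.l F)), F), by rw [Kb.proj_zero]⟩ with hxdef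
    set y : SmashCarrier D Kb := ⟨(Kb.zero (D.eV (D.l G)), G), by rw [Kb.proj_zero]⟩ with hydef
    have hcond : D.b x.val.2 = D.t y.val.2 := hFG
    have hz : (DB1.vc x y).val = (sg F G, D.vc F G) := by
      rw [h1.2.2.2.2.2.2.2.2.2.2.2.2.2.2.2.2.2 x y hcond]
      show (Kb.add (Kb.add (Ac.aV (D.invV (D.l G)) (Kb.zero (D.eV (D.l F))))
        (Kb.zero (D.eV (D.l G)))) (sg F G), D.vc F G) = _
      have hz1 : Ac.aV (D.invV (D.l G)) (Kb.zero (D.eV (D.l F))) = Kb.zero (D.eV (D.l G)) := by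
        rw [hEV, ← D.eV_inv, Ac.aV_zero, D.sV_inv]
      rw [hz1, MyAux.zeroAdd Kb (Kb.proj_zero _), MyAux.zeroAdd Kb (hpsg F G hFG)]
    have e := addPhi (DB1.vc x y)
    simp only [hz] at e
    have e' : Phi (DB1.vc x y) = DB2.vc (Phi x) (Phi y) := hvc x y hcond
    have hPx : (Phi x).val = (lam F, F) := hPhi0 F _
    have hPy : (Phi y).val = (lam G, G) := hPhi0 G _
    have cond2 : D.b (Phi x).val.2 = D.t (Phi y).val.2 := by
      rw [hproj, hproj]; exact hFG
    have e2 := h2.2.2.2.2.2.2.2.2.2.2.2.2.2.2.2.2.2 (Phi x) (Phi y) cond2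
    simp only [hPx, hPy] at e2
    have e3 : (Kb.add (sg F G) (lam (D.vc F G)), D.vc F G) =
        (Kb.add (Kb.add (Ac.aV (D.invV (D.l G)) (lam F)) (lam G)) (sg' F G), D.vc F G) := by
      rw [← e, e', e2]
    have key := congrArg Prod.fst e3
    simp only [dV11, AbBundle.sub]
    exact MyAux.rearrange Kb (hpsg F G hFG)
      (by rw [hlamp, D.vc_l F G hFG, D.eV_mul _ _ hEV])
      (by rw [Ac.aV_proj _ _ (by rw [hlamp, D.eV_inv]; exact hEV), D.sV_inv])
      (hlamp G) (hpsg' F G hFG) key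
  · -- the horizontal comparison
    intro F G hFG
    set x : SmashCarrier D Kb := ⟨(Kb.zero (D.eV (D.l F)), F), by rw [Kb.proj_zero]⟩ with hxdef
    set y : SmashCarrier D Kb := ⟨(Kb.zero (D.eV (D.l G)), G), by rw [Kb.proj_zero]⟩ with hydef
    have hcond : D.r x.val.2 = D.l y.val.2 := hFG
    have hz : (DB1.hc x y).val = (ta F G, D.hc F G) := by
      rw [h1.2.2.2.2.2.2.2.2.2.2.2.2.2.2.2.2.1 x y hcond]
      show (Kb.add (Kb.add (Kb.zero (D.eV (D.l F)))
        (Ac.aH (D.b F) (Kb.zero (D.eV (D.l G))))) (ta F G), D.hc F G) = _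
      have hz1 : Ac.aH (D.b F) (Kb.zero (D.eV (D.l G))) = Kb.zero (D.eV (D.l F)) := by
        rw [← hFG, ← D.corner_br, Ac.aH_zero, D.corner_bl]
      rw [hz1, MyAux.zeroAdd Kb (Kb.proj_zero _), MyAux.zeroAdd Kb (hpta F G hFG)]
    have e := addPhi (DB1.hc x y)
    simp only [hz] at e
    have e' : Phi (DB1.hc x y) = DB2.hc (Phi x) (Phi y) := hhc x y hcond
    have hPx : (Phi x).val = (lam F, F) := hPhi0 F _
    have hPy : (Phi y).val = (lam G, G) := hPhi0 G _
    have cond2 : D.r (Phi x).val.2 = D.l (Phi y).val.2 := by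
      rw [hproj, hproj]; exact hFG
    have e2 := h2.2.2.2.2.2.2.2.2.2.2.2.2.2.2.2.2.1 (Phi x) (Phi y) cond2
    simp only [hPx, hPy] at e2
    have e3 : (Kb.add (ta F G) (lam (D.hc F G)), D.hc F G) =
        (Kb.add (Kb.add (lam F) (Ac.aH (D.b F) (lam G))) (ta' F G), D.hc F G) := by
      rw [← e, e', e2]
    have key := congrArg Prod.fst e3
    simp only [dH11, AbBundle.sub]
    exact MyAux.rearrange Kb (hpta F G hFG)
      (by rw [hlamp, D.hc_l F G hFG])
      (hlamp F)
      (by rw [Ac.aH_proj _ _ (by rw [hlamp, ← hFG, D.corner_br]), D.corner_bl])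
      (hpta' F G hFG) key

end Stmt9
end

section
/- If (σ,τ) and (σ',τ') are cohomologous normalized total 1-cocycles, say (σ',τ') = (σ,τ) + d^0 λ for some λ: F → K, then the map Φ: K♯_{σ',τ'}F → K♯_{σ,τ}F given by (K,F) ↦ (K + λ(F), F) is an equivalence of double groupoid extensions (it preserves both the horizontal and vertical compositions, the side maps, and commutes with the inclusion of K and projection to F). -/
namespace AbBundle

variable {P K : Type*} (Kb : AbBundle P K)

/-- The fiber of the bundle at `p`, as a type. -/
abbrev Fiber (p : P) : Type _ := {k : K // Kb.proj k = p}

instance (p : P) : Add (Kb.Fiber p) :=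
  ⟨fun a b => ⟨Kb.add a.1 b.1, by
    rw [Kb.proj_add a.1 b.1 (a.2.trans b.2.symm)]; exact a.2⟩⟩

instance (p : P) : Zero (Kb.Fiber p) := ⟨⟨Kb.zero p, Kb.proj_zero p⟩⟩

instance (p : P) : Neg (Kb.Fiber p) :=
  ⟨fun a => ⟨Kb.neg a.1, (Kb.proj_neg a.1).trans a.2⟩⟩

instance (p : P) : AddCommGroup (Kb.Fiber p) where
  add_assoc a b c := Subtype.ext
    (Kb.add_assoc a.1 b.1 c.1 (a.2.trans b.2.symm) (b.2.trans c.2.symm))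
  zero_add a := Subtype.ext (by
    show Kb.add (Kb.zero p) a.1 = a.1
    rw [show Kb.zero p = Kb.zero (Kb.proj a.1) from congrArg Kb.zero a.2.symm]
    exact Kb.zero_add a.1)
  add_zero a := Subtype.ext (by
    show Kb.add a.1 (Kb.zero p) = a.1
    rw [Kb.add_comm a.1 (Kb.zero p) (a.2.trans (Kb.proj_zero p).symm)]
    rw [show Kb.zero p = Kb.zero (Kb.proj a.1) from congrArg Kb.zero a.2.symm]
    exact Kb.zero_add a.1)
  add_comm a b := Subtype.ext (Kb.add_comm a.1 b.1 (a.2.trans b.2.symm))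
  neg_add_cancel a := Subtype.ext (by
    show Kb.add (Kb.neg a.1) a.1 = Kb.zero p
    rw [Kb.add_comm (Kb.neg a.1) a.1 (Kb.proj_neg a.1), Kb.add_neg a.1, a.2])
  nsmul := nsmulRec
  zsmul := zsmulRec

theorem main_arith {p : P} {a b t u v w : K}
    (ha : Kb.proj a = p) (hb : Kb.proj b = p) (ht : Kb.proj t = p)
    (hu : Kb.proj u = p) (hv : Kb.proj v = p) (hw : Kb.proj w = p) :
    Kb.add (Kb.add (Kb.add a b) (Kb.add t (Kb.add (Kb.add v (Kb.neg w)) u))) w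
      = Kb.add (Kb.add (Kb.add a u) (Kb.add b v)) t :=
  congrArg Subtype.val
    (show ((⟨a, ha⟩ + ⟨b, hb⟩ : Kb.Fiber p) +
        (⟨t, ht⟩ + ((⟨v, hv⟩ + -(⟨w, hw⟩ : Kb.Fiber p)) + ⟨u, hu⟩))) + ⟨w, hw⟩
      = ((⟨a, ha⟩ + ⟨u, hu⟩) + (⟨b, hb⟩ + ⟨v, hv⟩)) + ⟨t, ht⟩ from by abel)

theorem add_neg_cancel_right' {p : P} {a l : K}
    (ha : Kb.proj a = p) (hl : Kb.proj l = p) :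
    Kb.add (Kb.add a l) (Kb.neg l) = a :=
  congrArg Subtype.val
    (show ((⟨a, ha⟩ + ⟨l, hl⟩ : Kb.Fiber p)) + -(⟨l, hl⟩ : Kb.Fiber p) = ⟨a, ha⟩ from by abel)

theorem neg_add_cancel_right' {p : P} {a l : K}
    (ha : Kb.proj a = p) (hl : Kb.proj l = p) :
    Kb.add (Kb.add a (Kb.neg l)) l = a :=
  congrArg Subtype.val
    (show ((⟨a, ha⟩ : Kb.Fiber p) + -(⟨l, hl⟩ : Kb.Fiber p)) + ⟨l, hl⟩ = ⟨a, ha⟩ from by abel)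

theorem add_zero_right {p : P} {a : K} (ha : Kb.proj a = p) :
    Kb.add a (Kb.zero p) = a :=
  congrArg Subtype.val (show (⟨a, ha⟩ + 0 : Kb.Fiber p) = ⟨a, ha⟩ from _root_.add_zero _)

theorem zero_add' {p : P} {a : K} (ha : Kb.proj a = p) :
    Kb.add (Kb.zero p) a = a :=
  congrArg Subtype.val (show ((0 : Kb.Fiber p) + ⟨a, ha⟩) = ⟨a, ha⟩ from _root_.zero_add _)

theorem cancel_zero {p : P} {t : K} (ht : Kb.proj t = p)
    (h : Kb.add (Kb.zero p) t = Kb.zero p) : t = Kb.zero p := by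
  have h' : (0 : Kb.Fiber p) + ⟨t, ht⟩ = 0 := Subtype.ext h
  have h2 : (⟨t, ht⟩ : Kb.Fiber p) = 0 := by simpa using h'
  exact congrArg Subtype.val h2

theorem lam_zero_of {p : P} {l : K} (hl : Kb.proj l = p)
    (h : Kb.zero p = Kb.add (Kb.zero p) (Kb.add (Kb.add l (Kb.neg l)) l)) :
    l = Kb.zero p := by
  have h' : (0 : Kb.Fiber p) = 0 + ((⟨l, hl⟩ + -⟨l, hl⟩) + ⟨l, hl⟩) := Subtype.ext h
  have h2 : (⟨l, hl⟩ : Kb.Fiber p) = 0 := by simpa using h'.symm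
  exact congrArg Subtype.val h2

end AbBundle

theorem DGpd.invV_idV {B V H P : Type*} (D : DGpd B V H P) (p : P) :
    D.invV (D.idV p) = D.idV p := by
  have h1 := D.invV_mul (D.idV p)
  rw [D.eV_id] at h1
  have h2 := D.mulV_id (D.invV (D.idV p))
  rw [D.eV_inv, D.sV_id] at h2
  exact h2.symm.trans h1

section AuxSmash

variable {B V H P K : Type*}

theorem smash_ta_id (D : DGpd B V H P) (Kb : AbBundle P K) (Ac : DAction D Kb)
    (sg ta : B → B → K)
    (htaP : ∀ F G, D.r F = D.l G → Kb.proj (ta F G) = D.eV (D.l F))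
    (DB : DGpd (SmashCarrier D Kb) V H P)
    (h : IsSmashStructure D Kb Ac sg ta DB) (g : V) :
    ta (D.idh g) (D.idh g) = Kb.zero (D.eV g) := by
  obtain ⟨-, -, -, -, -, -, -, -, -, -, -, -, hl, -, hidh, -, hhc, -⟩ := h
  have hval : (DB.idh g).val = (Kb.zero (D.eV g), D.idh g) := hidh g
  have hlg : DB.l (DB.idh g) = g := by rw [hl, hval]; exact D.idh_l g
  have hunit : DB.hc (DB.idh g) (DB.idh g) = DB.idh g := by
    have h0 := DB.idh_hc (DB.idh g); rwa [hlg] at h0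
  have hcompat : D.r (DB.idh g).val.2 = D.l (DB.idh g).val.2 := by
    rw [hval]; exact (D.idh_r g).trans (D.idh_l g).symm
  have hvals := hhc (DB.idh g) (DB.idh g) hcompat
  rw [hunit] at hvals
  simp only [hval] at hvals
  rw [Prod.mk.injEq] at hvals
  obtain ⟨h1, -⟩ := hvals
  have haH : Ac.aH (D.b (D.idh g)) (Kb.zero (D.eV g)) = Kb.zero (D.eV g) := by
    have h2 := Ac.aH_id (Kb.zero (D.eV g))
    rw [Kb.proj_zero] at h2
    rw [D.idh_b]; exact h2
  rw [haH, Kb.zero_add' (Kb.proj_zero _)] at h1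
  exact Kb.cancel_zero
    ((htaP _ _ ((D.idh_r g).trans (D.idh_l g).symm)).trans (congrArg D.eV (D.idh_l g)))
    h1.symm

theorem smash_sg_id (D : DGpd B V H P) (Kb : AbBundle P K) (Ac : DAction D Kb)
    (sg ta : B → B → K)
    (hsgP : ∀ F G, D.b F = D.t G → Kb.proj (sg F G) = D.eV (D.l G))
    (DB : DGpd (SmashCarrier D Kb) V H P)
    (h : IsSmashStructure D Kb Ac sg ta DB) (x : H) :
    sg (D.idv x) (D.idv x) = Kb.zero (D.sH x) := by
  obtain ⟨-, -, -, -, -, -, -, -, -, -, -, hb, -, -, -, hidv, -, hvc⟩ := h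
  have hval : (DB.idv x).val = (Kb.zero (D.sH x), D.idv x) := hidv x
  have hbx : DB.b (DB.idv x) = x := by rw [hb, hval]; exact D.idv_b x
  have hunit : DB.vc (DB.idv x) (DB.idv x) = DB.idv x := by
    have h0 := DB.vc_idv (DB.idv x); rwa [hbx] at h0
  have hcompat : D.b (DB.idv x).val.2 = D.t (DB.idv x).val.2 := by
    rw [hval]; exact (D.idv_b x).trans (D.idv_t x).symm
  have hvals := hvc (DB.idv x) (DB.idv x) hcompat
  rw [hunit] at hvals
  simp only [hval] at hvals
  rw [Prod.mk.injEq] at hvals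
  obtain ⟨h1, -⟩ := hvals
  have haV : Ac.aV (D.invV (D.l (D.idv x))) (Kb.zero (D.sH x)) = Kb.zero (D.sH x) := by
    have h2 := Ac.aV_id (Kb.zero (D.sH x))
    rw [Kb.proj_zero] at h2
    rw [D.idv_l, D.invV_idV]; exact h2
  rw [haV, Kb.zero_add' (Kb.proj_zero _)] at h1
  exact Kb.cancel_zero
    ((hsgP _ _ ((D.idv_b x).trans (D.idv_t x).symm)).trans
      (by rw [D.idv_l, D.eV_id]))
    h1.symm

end AuxSmash

section Stmt10

variable {B V H P K : Type*}

/-- If `(σ,τ)` and `(σ',τ')` are cohomologous normalized total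
1-cocycles, say `(σ',τ') = (σ,τ) + d⁰λ`, then `Φ : K ♯_{σ',τ'} F → K ♯_{σ,τ} F`,
`(K,F) ↦ (K + λ(F), F)`, is an equivalence of double groupoid extensions: it is
bijective, preserves both compositions, the side maps and the identity boxes, and
commutes with the inclusion of `K` and with the projection onto `F`. -/
theorem cohomologous_cocycles_give_equivalent_extensions
    (D : DGpd B V H P) (Kb : AbBundle P K) (Ac : DAction D Kb)
    (sg ta sg' ta' : B → B → K)
    (hco : IsTotal1Cocycle D Kb Ac sg ta) (hno : IsNormalizedPair D Kb sg ta)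
    (hco' : IsTotal1Cocycle D Kb Ac sg' ta') (hno' : IsNormalizedPair D Kb sg' ta')
    (lam : B → K) (hlam : ∀ F : B, Kb.proj (lam F) = D.eV (D.l F))
    (hsg : ∀ F G, D.b F = D.t G → sg' F G = Kb.add (sg F G) (dV11 D Kb Ac lam F G))
    (hta : ∀ F G, D.r F = D.l G → ta' F G = Kb.add (ta F G) (dH11 D Kb Ac lam F G))
    (DB : DGpd (SmashCarrier D Kb) V H P)
    (DB' : DGpd (SmashCarrier D Kb) V H P)
    (h1 : IsSmashStructure D Kb Ac sg ta DB)
    (h2 : IsSmashStructure D Kb Ac sg' ta' DB') :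
    ∃ Phi : SmashCarrier D Kb → SmashCarrier D Kb,
      (∀ x, (Phi x).val = (Kb.add x.val.1 (lam x.val.2), x.val.2)) ∧
      Function.Bijective Phi ∧
      (∀ x, DB.t (Phi x) = DB'.t x) ∧ (∀ x, DB.b (Phi x) = DB'.b x) ∧
      (∀ x, DB.l (Phi x) = DB'.l x) ∧ (∀ x, DB.r (Phi x) = DB'.r x) ∧
      (∀ x y, D.r x.val.2 = D.l y.val.2 →
        Phi (DB'.hc x y) = DB.hc (Phi x) (Phi y)) ∧
      (∀ x y, D.b x.val.2 = D.t y.val.2 →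
        Phi (DB'.vc x y) = DB.vc (Phi x) (Phi y)) ∧
      (∀ g : V, Phi (DB'.idh g) = DB.idh g) ∧
      (∀ x : H, Phi (DB'.idv x) = DB.idv x) ∧
      (∀ x : SmashCarrier D Kb, (∃ p, x.val.2 = D.Theta p) → Phi x = x) := by
  -- λ vanishes on horizontal identity boxes
  have hlam_idh : ∀ g : V, lam (D.idh g) = Kb.zero (D.eV g) := by
    intro g
    have hta0 := smash_ta_id D Kb Ac sg ta hco.2.1 DB h1 g
    have hta0' := smash_ta_id D Kb Ac sg' ta' hco'.2.1 DB' h2 g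
    have h0 := hta (D.idh g) (D.idh g) (by rw [D.idh_r, D.idh_l])
    rw [hta0, hta0'] at h0
    have hLp : Kb.proj (lam (D.idh g)) = D.eV g :=
      (hlam _).trans (congrArg D.eV (D.idh_l g))
    have hcc : D.hc (D.idh g) (D.idh g) = D.idh g := by
      have h3 := D.hc_idh (D.idh g); rwa [D.idh_r] at h3
    have haH : Ac.aH (D.b (D.idh g)) (lam (D.idh g)) = lam (D.idh g) := by
      have h3 := Ac.aH_id (lam (D.idh g))
      rw [hLp] at h3
      rw [D.idh_b]; exact h3
    simp only [dH11, AbBundle.sub] at h0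
    rw [hcc, haH] at h0
    exact Kb.lam_zero_of hLp h0
  -- λ vanishes on vertical identity boxes
  have hlam_idv : ∀ x : H, lam (D.idv x) = Kb.zero (D.sH x) := by
    intro x
    have hsg0 := smash_sg_id D Kb Ac sg ta hco.1 DB h1 x
    have hsg0' := smash_sg_id D Kb Ac sg' ta' hco'.1 DB' h2 x
    have h0 := hsg (D.idv x) (D.idv x) (by rw [D.idv_b, D.idv_t])
    rw [hsg0, hsg0'] at h0
    have hLp : Kb.proj (lam (D.idv x)) = D.sH x :=
      (hlam _).trans (by rw [D.idv_l, D.eV_id])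
    have hcc : D.vc (D.idv x) (D.idv x) = D.idv x := by
      have h3 := D.vc_idv (D.idv x); rwa [D.idv_b] at h3
    have haV : Ac.aV (D.invV (D.l (D.idv x))) (lam (D.idv x)) = lam (D.idv x) := by
      have h3 := Ac.aV_id (lam (D.idv x))
      rw [hLp] at h3
      rw [D.idv_l, D.invV_idV]; exact h3
    simp only [dV11, AbBundle.sub] at h0
    rw [hcc, haV] at h0
    exact Kb.lam_zero_of hLp h0
  obtain ⟨hsgP, htaP, -, -, -⟩ := hco
  obtain ⟨-, -, -, -, -, -, -, -, -, -, ht1, hb1, hl1, hr1, hidh1, hidv1, hhc1, hvc1⟩ := h1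
  obtain ⟨-, -, -, -, -, -, -, -, -, -, ht2, hb2, hl2, hr2, hidh2, hidv2, hhc2, hvc2⟩ := h2
  have memPhi : ∀ z : SmashCarrier D Kb,
      Kb.proj (Kb.add z.val.1 (lam z.val.2)) = D.eV (D.l z.val.2) := fun z => by
    rw [Kb.proj_add _ _ (z.2.trans (hlam z.val.2).symm)]; exact z.2
  let Phi : SmashCarrier D Kb → SmashCarrier D Kb :=
    fun z => ⟨(Kb.add z.val.1 (lam z.val.2), z.val.2), memPhi z⟩
  have hPhidef : ∀ z : SmashCarrier D Kb,
      (Phi z).val = (Kb.add z.val.1 (lam z.val.2), z.val.2) := fun z => rfl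
  refine ⟨Phi, fun x => rfl, ?_, ?_, ?_, ?_, ?_, ?_, ?_, ?_, ?_, ?_⟩
  · -- bijectivity
    have memPsi : ∀ z : SmashCarrier D Kb,
        Kb.proj (Kb.add z.val.1 (Kb.neg (lam z.val.2))) = D.eV (D.l z.val.2) := fun z => by
      rw [Kb.proj_add _ _ (z.2.trans ((Kb.proj_neg _).trans (hlam z.val.2)).symm)]
      exact z.2
    refine Function.bijective_iff_has_inverse.mpr
      ⟨fun z => ⟨(Kb.add z.val.1 (Kb.neg (lam z.val.2)), z.val.2), memPsi z⟩,
        fun x => ?_, fun x => ?_⟩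
    · apply Subtype.ext
      show (Kb.add (Kb.add x.val.1 (lam x.val.2)) (Kb.neg (lam x.val.2)), x.val.2) = x.val
      rw [Kb.add_neg_cancel_right' x.2 (hlam x.val.2)]
    · apply Subtype.ext
      show (Kb.add (Kb.add x.val.1 (Kb.neg (lam x.val.2))) (lam x.val.2), x.val.2) = x.val
      rw [Kb.neg_add_cancel_right' x.2 (hlam x.val.2)]
  · intro x; rw [ht1, ht2]
  · intro x; rw [hb1, hb2]
  · intro x; rw [hl1, hl2]
  · intro x; rw [hr1, hr2]
  · -- horizontal composition
    intro x y h
    apply Subtype.ext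
    have e1 := hhc1 (Phi x) (Phi y) h
    have e2 := hhc2 x y h
    simp only [hPhidef, e1, e2]
    have hbFe : D.eH (D.b x.val.2) = D.eV (D.l y.val.2) :=
      (D.corner_br x.val.2).trans (congrArg D.eV h)
    have ha : Kb.proj x.val.1 = D.eV (D.l x.val.2) := x.2
    have hb : Kb.proj (Ac.aH (D.b x.val.2) y.val.1) = D.eV (D.l x.val.2) :=
      (Ac.aH_proj _ _ (y.2.trans hbFe.symm)).trans (D.corner_bl x.val.2)
    have hv : Kb.proj (Ac.aH (D.b x.val.2) (lam y.val.2)) = D.eV (D.l x.val.2) :=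
      (Ac.aH_proj _ _ ((hlam y.val.2).trans hbFe.symm)).trans (D.corner_bl x.val.2)
    have ht' : Kb.proj (ta x.val.2 y.val.2) = D.eV (D.l x.val.2) := htaP _ _ h
    have hu : Kb.proj (lam x.val.2) = D.eV (D.l x.val.2) := hlam _
    have hw : Kb.proj (lam (D.hc x.val.2 y.val.2)) = D.eV (D.l x.val.2) :=
      (hlam _).trans (congrArg D.eV (D.hc_l x.val.2 y.val.2 h))
    rw [hta x.val.2 y.val.2 h]
    simp only [dH11, AbBundle.sub]
    rw [Ac.aH_add (D.b x.val.2) y.val.1 (lam y.val.2)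
      (y.2.trans (hlam y.val.2).symm) (y.2.trans hbFe.symm)]
    rw [Prod.mk.injEq]
    exact ⟨Kb.main_arith ha hb ht' hu hv hw, rfl⟩
  · -- vertical composition
    intro x y h
    apply Subtype.ext
    have e1 := hvc1 (Phi x) (Phi y) h
    have e2 := hvc2 x y h
    simp only [hPhidef, e1, e2]
    have hEq : D.eV (D.l x.val.2) = D.sV (D.l y.val.2) :=
      (D.corner_bl x.val.2).symm.trans ((congrArg D.sH h).trans (D.corner_tl y.val.2))
    have condx : Kb.proj x.val.1 = D.eV (D.invV (D.l y.val.2)) :=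
      x.2.trans (hEq.trans (D.eV_inv _).symm)
    have condf : Kb.proj (lam x.val.2) = D.eV (D.invV (D.l y.val.2)) :=
      (hlam _).trans (hEq.trans (D.eV_inv _).symm)
    have ha : Kb.proj (Ac.aV (D.invV (D.l y.val.2)) x.val.1) = D.eV (D.l y.val.2) :=
      (Ac.aV_proj _ _ condx).trans (D.sV_inv _)
    have hu : Kb.proj (Ac.aV (D.invV (D.l y.val.2)) (lam x.val.2)) = D.eV (D.l y.val.2) :=
      (Ac.aV_proj _ _ condf).trans (D.sV_inv _)
    have hb : Kb.proj y.val.1 = D.eV (D.l y.val.2) := y.2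
    have hv : Kb.proj (lam y.val.2) = D.eV (D.l y.val.2) := hlam _
    have ht' : Kb.proj (sg x.val.2 y.val.2) = D.eV (D.l y.val.2) := hsgP _ _ h
    have hw : Kb.proj (lam (D.vc x.val.2 y.val.2)) = D.eV (D.l y.val.2) := by
      refine ((hlam _).trans (congrArg D.eV (D.vc_l x.val.2 y.val.2 h))).trans ?_
      exact D.eV_mul (D.l x.val.2) (D.l y.val.2) hEq
    rw [hsg x.val.2 y.val.2 h]
    simp only [dV11, AbBundle.sub]
    rw [Ac.aV_add (D.invV (D.l y.val.2)) x.val.1 (lam x.val.2)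
      (x.2.trans (hlam x.val.2).symm) condx]
    rw [Prod.mk.injEq]
    exact ⟨Kb.main_arith ha hb ht' hu hv hw, rfl⟩
  · -- horizontal identities
    intro g
    apply Subtype.ext
    simp only [hPhidef, hidh2 g, hidh1 g]
    rw [hlam_idh g, Prod.mk.injEq]
    exact ⟨Kb.zero_add' (Kb.proj_zero _), rfl⟩
  · -- vertical identities
    intro x
    apply Subtype.ext
    simp only [hPhidef, hidv2 x, hidv1 x]
    rw [hlam_idv x, Prod.mk.injEq]
    exact ⟨Kb.zero_add' (Kb.proj_zero _), rfl⟩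
  · -- fixes the degenerate boxes
    intro x hx
    obtain ⟨p, hp⟩ := hx
    apply Subtype.ext
    rw [hPhidef]
    have hzl : lam x.val.2 = Kb.zero p := by
      rw [hp]; simp only [DGpd.Theta]; rw [hlam_idh, D.eV_id]
    have hx1 : Kb.proj x.val.1 = p := by
      refine x.2.trans ?_
      rw [hp]; simp only [DGpd.Theta]; rw [D.idh_l, D.eV_id]
    rw [hzl, Kb.add_zero_right hx1]

end Stmt10
end
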